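/- arXiv:2509.00436 — 4 statements merged into one kernel-verified Lean document; each statement's English description precedes it below -/
import Mathlib

section
/- For every integer n ≥ 0, the number of u-parking distributions of length n equals the n-th m-Fuss–Catalan number, i.e. |PK(n)| = (1/(mn+1))·C(mn+n, n). -/
open scoped Classical
open Finset

noncomputable section

/-- The set of positive nondecreasing sequences of length `n` bounded above by `b` is finite. -/
lemma boundedSeq_finite (n : ℕ) (b : ℕ → ℕ) :
    {p : Fin n → ℕ | Monotone p ∧ ∀ i : Fin n, 1 ≤ p i ∧ p i ≤ b i}.Finite := by
  have h : {p : Fin n → ℕ | Monotone p ∧ ∀ i : Fin n, 1 ≤ p i ∧ p i ≤ b i} ⊆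
      Set.pi Set.univ (fun i : Fin n => Set.Iic (b i)) := by
    intro p hp
    rw [Set.mem_pi]
    intro i _
    exact (hp.2 i).2
  exact (Set.Finite.pi fun i : Fin n => Set.finite_Iic (b (i : ℕ))).subset h

/-- The finset of nondecreasing sequences `p : Fin n → ℕ` of positive integers
with `p i ≤ b i` for all `i`. -/
def BSeq (n : ℕ) (b : ℕ → ℕ) : Finset (Fin n → ℕ) := (boundedSeq_finite n b).toFinset

/-- `PK m n` : the u-parking distributions of length `n`, i.e. nondecreasing sequences
of positive integers with `p i ≤ m*(i-1)+1` (here indexed from `0`, so `p i ≤ m*i+1`). -/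
def PK (m n : ℕ) : Finset (Fin n → ℕ) := BSeq n (fun i => m * i + 1)

/-- `luck p` : the number of indices `i` with `p i = m*(i-1)+1` (0-indexed: `m*i+1`). -/
def luck (m : ℕ) {n : ℕ} (p : Fin n → ℕ) : ℕ :=
  (Finset.univ.filter (fun i : Fin n => p i = m * (i : ℕ) + 1)).card

/-- `freq j p` = `ω_j(p)` : the number of indices `i` with `p i = j`. -/
def freq (j : ℕ) {n : ℕ} (p : Fin n → ℕ) : ℕ :=
  (Finset.univ.filter (fun i : Fin n => p i = j)).card

/-- `hcnt m n k r` = `h_{n,k,r}` : the number of nondecreasing sequences of positive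
integers with `p_i ≤ m*(i+k-1) - r` for `1 ≤ i ≤ n` (0-indexed: `p i ≤ m*(i+k) - r`). -/
def hcnt (m n k r : ℕ) : ℕ := (BSeq n (fun i => m * (i + k) - r)).card

/-- `Cnt m n k` = `C_{n,k}` : the number of `p ∈ PK m n` with `luck p = k`. -/
def Cnt (m n k : ℕ) : ℕ := ((PK m n).filter (fun p => luck m p = k)).card

/-- `Rpoly m n` = `R_n(q) = Σ_k C_{n,k} q^k ∈ ℤ[q]`. -/
def Rpoly (m n : ℕ) : Polynomial ℤ :=
  ∑ k ∈ Finset.range (n + 1), (Cnt m n k : Polynomial ℤ) * Polynomial.X ^ k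

/-- `hfull t k` : the complete homogeneous symmetric polynomial of degree `k`
in variables `q_0, …, q_{t-1}`, i.e. the sum of all monomials of total degree `k`. -/
def hfull (t k : ℕ) : MvPolynomial (Fin t) ℤ :=
  ∑ α ∈ Finset.Nat.antidiagonalTuple t k, ∏ i : Fin t, MvPolynomial.X i ^ α i

/-- `ffix m p ℓ` = `i_ℓ(p)` : the first fixed point of type `ℓ`, the smallest `k` with
`2 ≤ k ≤ n` and `p_k ≥ m*(k-2)+1+ℓ` (1-indexed), or `n+1` if there is none. -/
def ffix (m : ℕ) {n : ℕ} (p : Fin n → ℕ) (ℓ : ℕ) : ℕ :=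
  sInf ({k | 2 ≤ k ∧ ∃ i : Fin n, (i : ℕ) + 1 = k ∧ m * (k - 2) + 1 + ℓ ≤ p i} ∪ {n + 1})

/-- The extended first fixed points: `i_0 = 2`, `i_{m+1} = n+1`, and `i_ℓ = ffix m p ℓ`
for `1 ≤ ℓ ≤ m`. -/
def ffixE (m : ℕ) {n : ℕ} (p : Fin n → ℕ) (j : ℕ) : ℕ :=
  if j = 0 then 2 else if j = m + 1 then n + 1 else ffix m p j

/-- `pget p k` = `p_k` (1-indexed), `0` out of range. -/
def pget {n : ℕ} (p : Fin n → ℕ) (k : ℕ) : ℕ := if h : k - 1 < n then p ⟨k - 1, h⟩ else 0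

/-- The `(ℓ+1)`-st part `P_{ℓ+1}` (for `0 ≤ ℓ ≤ m`) of the first-return decomposition of `p`:
the list `(p_k - (p_{i_ℓ} - 1))` for `i_ℓ ≤ k ≤ i_{ℓ+1} - 1`. -/
def FRD (m : ℕ) {n : ℕ} (p : Fin n → ℕ) (ℓ : ℕ) : List ℕ :=
  (List.range (ffixE m p (ℓ + 1) - ffixE m p ℓ)).map
    (fun t => pget p (ffixE m p ℓ + t) - (pget p (ffixE m p ℓ) - 1))

/-- A list is a u-parking distribution: nondecreasing, with `l.get i ∈ [1, m*i+1]`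
(0-indexed). -/
def isPKlist (m : ℕ) (l : List ℕ) : Prop :=
  l.Pairwise (· ≤ ·) ∧ ∀ i : Fin l.length, 1 ≤ l.get i ∧ l.get i ≤ m * (i : ℕ) + 1

/-- `θ(p)` : the nondecreasing rearrangement of the concatenation of `p` with the list of
all `j ∈ {1, …, m*n-m+1}` with `j ≢ 1 (mod m)`. -/
def theta (m n : ℕ) (p : Fin n → ℕ) : List ℕ :=
  Multiset.sort
    ((List.ofFn p : Multiset ℕ) +
      (((List.range (m * n - m + 1)).map (· + 1)).filter
        (fun j => ¬ j ≡ 1 [MOD m]) : List ℕ)) (· ≤ ·)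

/-- Parking distributions on the `m`-caterpillar of length `n`, as nondecreasing lists. -/
def PKcat (m n : ℕ) : Set (List ℕ) :=
  {a | a.length = m * n - m + 1 ∧ a.Pairwise (· ≤ ·) ∧
       (∀ x ∈ a, 1 ≤ x ∧ x ≤ m * n - m + 1) ∧
       (∀ i : ℕ, 1 ≤ i → i ≤ n →
         m * (i - 1) + 1 ≤ (a.filter (fun x => x ≤ m * (i - 1) + 1)).length) ∧
       (∀ j : ℕ, 1 ≤ j → j ≤ m * n - m + 1 → ¬ j ≡ 1 [MOD m] → j ∈ a)}

private def Sps (c : ℕ → ℕ) (r t : ℕ) : ℕ := ∑ i ∈ range t, c (r + i)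

private def GoodCL (m n : ℕ) (c : ℕ → ℕ) (r : ℕ) : Prop :=
  ∀ t, 1 ≤ t → t ≤ m * n → t ≤ m * Sps c r t

private lemma sum_period (c : ℕ → ℕ) (N n : ℕ) (hper : ∀ i, c (i + N) = c i)
    (hsum : ∑ i ∈ range N, c i = n) : ∀ r, ∑ i ∈ range N, c (r + i) = n := by
  intro r
  induction r with
  | zero => simpa using hsum
  | succ r ih =>
    have h1 : ∑ i ∈ range (N+1), c (r + i) = ∑ i ∈ range N, c (r + i) + c (r + N) :=
      sum_range_succ _ _
    have h2 : ∑ i ∈ range (N+1), c (r + i) = c r + ∑ i ∈ range N, c (r + 1 + i) := by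
      rw [sum_range_succ']
      simp [add_comm, add_assoc, add_left_comm]
    have h3 : c (r + N) = c r := hper r
    omega

private def Afun (m : ℕ) (c : ℕ → ℕ) (t : ℕ) : ℤ := (t : ℤ) - m * ∑ i ∈ range t, c i

private lemma Afun_add (m : ℕ) (c : ℕ → ℕ) (r s : ℕ) :
    Afun m c (r + s) = Afun m c r + ((s : ℤ) - m * Sps c r s) := by
  unfold Afun Sps
  rw [sum_range_add]
  push_cast
  ring

private lemma good_iff_A (m n : ℕ) (c : ℕ → ℕ) (r : ℕ) :
    GoodCL m n c r ↔ ∀ s, 1 ≤ s → s ≤ m * n → Afun m c (r + s) ≤ Afun m c r := by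
  unfold GoodCL
  constructor
  · intro h s h1 h2
    rw [Afun_add]
    have := h s h1 h2
    have : (s : ℤ) ≤ (m : ℤ) * Sps c r s := by exact_mod_cast this
    linarith
  · intro h s h1 h2
    have := h s h1 h2
    rw [Afun_add] at this
    have h3 : (s : ℤ) - (m : ℤ) * Sps c r s ≤ 0 := by linarith
    have : (s : ℤ) ≤ (m : ℤ) * Sps c r s := by linarith
    exact_mod_cast this

/-- The cycle lemma over ℕ. -/
private lemma cycle_lemma (m n : ℕ) (c : ℕ → ℕ)
    (hper : ∀ i, c (i + (m * n + 1)) = c i)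
    (hsum : ∑ i ∈ range (m * n + 1), c i = n) :
    ∃! r, r < m * n + 1 ∧ GoodCL m n c r := by
  set N := m * n + 1 with hN
  -- A(t+N) = A t + 1
  have hA : ∀ t, Afun m c (t + N) = Afun m c t + 1 := by
    intro t
    rw [Afun_add]
    have : Sps c t N = n := sum_period c N n hper hsum t
    rw [this, hN]
    push_cast
    ring
  -- existence: first argmax over range N
  have hne : (range N).Nonempty := ⟨0, mem_range.2 (by omega)⟩
  obtain ⟨M, hM⟩ := ((range N).image (Afun m c)).max_of_nonempty (hne.image _)
  have hMmem : M ∈ (range N).image (Afun m c) := Finset.mem_of_max hM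
  obtain ⟨r0, hr0N, hr0M⟩ := Finset.mem_image.1 hMmem
  have hle : ∀ t, t < N → Afun m c t ≤ M := by
    intro t ht
    exact Finset.le_max_of_eq (Finset.mem_image_of_mem _ (mem_range.2 ht)) hM
  -- take the least argmax
  have hS : ∃ r, r < N ∧ Afun m c r = M := ⟨r0, mem_range.1 hr0N, hr0M⟩
  classical
  let r := Nat.find hS
  obtain ⟨hrN, hrM⟩ : r < N ∧ Afun m c r = M := Nat.find_spec hS
  have hfirst : ∀ t, t < r → Afun m c t < M := by
    intro t ht
    have htN : t < N := lt_trans ht hrN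
    rcases lt_or_eq_of_le (hle t htN) with h | h
    · exact h
    · exact absurd ⟨htN, h⟩ (Nat.find_min hS ht)
  have hgood : GoodCL m n c r := by
    rw [good_iff_A]
    intro s h1 h2
    rcases lt_or_ge (r + s) N with h | h
    · rw [hrM]; exact hle _ h
    · have ht : r + s - N < r := by omega
      have : Afun m c (r + s) = Afun m c (r + s - N) + 1 := by
        have e : r + s - N + N = r + s := by omega
        calc Afun m c (r + s) = Afun m c (r + s - N + N) := by rw [e]
        _ = Afun m c (r + s - N) + 1 := hA _
      rw [this, hrM]
      have := hfirst _ ht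
      omega
  refine ⟨r, ⟨hrN, hgood⟩, ?_⟩
  -- uniqueness
  rintro r' ⟨hr'N, hgood'⟩
  by_contra hne'
  -- wlog via both directions
  have key : ∀ a b, a < N → b < N → a < b → GoodCL m n c a → GoodCL m n c b → False := by
    intro a b haN hbN hab ga gb
    rw [good_iff_A] at ga gb
    have h1 : Afun m c b ≤ Afun m c a := by
      have : b = a + (b - a) := by omega
      rw [this]; exact ga _ (by omega) (by omega)
    have h2 : Afun m c (b + (N - (b - a))) ≤ Afun m c b := gb _ (by omega) (by omega)
    have h3 : b + (N - (b - a)) = a + N := by omega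
    rw [h3, hA] at h2
    omega
  rcases lt_trichotomy r r' with h | h | h
  · exact key r r' hrN hr'N h hgood hgood'
  · exact hne' h.symm
  · exact key r' r hr'N hrN h hgood' hgood

section SymPart
variable (m n : ℕ)

private lemma hNpos : 0 < m * n + 1 := Nat.succ_pos _

private def cntS (s : Sym (Fin (m * n + 1)) n) (j : ℕ) : ℕ :=
  Multiset.count (⟨j % (m * n + 1), Nat.mod_lt _ (hNpos m n)⟩ : Fin (m * n + 1)) s.1

private lemma cntS_congr (s : Sym (Fin (m * n + 1)) n) {i j : ℕ}
    (h : i % (m * n + 1) = j % (m * n + 1)) : cntS m n s i = cntS m n s j := by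
  unfold cntS
  congr 1
  exact Fin.ext h

private lemma cntS_period (s : Sym (Fin (m * n + 1)) n) (i : ℕ) :
    cntS m n s (i + (m * n + 1)) = cntS m n s i :=
  cntS_congr m n s (Nat.add_mod_right _ _)

private lemma sum_univ_count {α : Type*} [Fintype α] [DecidableEq α] (s : Multiset α) :
    ∑ a : α, s.count a = Multiset.card s := by
  rw [← Multiset.toFinset_sum_count_eq]
  refine (Finset.sum_subset (Finset.subset_univ _) ?_).symm
  intro x _ hx
  simpa [Multiset.count_eq_zero] using fun h => hx (Multiset.mem_toFinset.2 h)

private lemma cntS_sum (s : Sym (Fin (m * n + 1)) n) :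
    ∑ j ∈ range (m * n + 1), cntS m n s j = n := by
  have h1 : ∑ j ∈ range (m * n + 1), cntS m n s j = ∑ v : Fin (m * n + 1), s.1.count v := by
    rw [← Fin.sum_univ_eq_sum_range (fun j => cntS m n s j) (m * n + 1)]
    refine Finset.sum_congr rfl fun v _ => ?_
    unfold cntS
    congr 1
    exact Fin.ext (Nat.mod_eq_of_lt v.isLt)
  rw [h1, sum_univ_count, s.2]

private def rotS (r : Fin (m * n + 1)) (s : Sym (Fin (m * n + 1)) n) : Sym (Fin (m * n + 1)) n :=
  ⟨s.1.map (fun v => v + r), by rw [Multiset.card_map, s.2]⟩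

private lemma cntS_rotS (r : Fin (m * n + 1)) (s : Sym (Fin (m * n + 1)) n) (j : ℕ) :
    cntS m n (rotS m n r s) j = cntS m n s (j + (m * n + 1 - r.val)) := by
  have hinj : Function.Injective (fun v : Fin (m * n + 1) => v + r) := fun a b h => by
    simpa using congrArg (fun x => x - r) h
  have h2 : (⟨j % (m * n + 1), Nat.mod_lt _ (hNpos m n)⟩ : Fin (m * n + 1)) =
      (fun v : Fin (m * n + 1) => v + r) (⟨j % (m * n + 1), Nat.mod_lt _ (hNpos m n)⟩ - r) := by
    simp
  have h1 : cntS m n (rotS m n r s) j =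
      Multiset.count ((⟨j % (m * n + 1), Nat.mod_lt _ (hNpos m n)⟩ : Fin (m * n + 1)) - r) s.1 := by
    show Multiset.count _ (s.1.map (fun v => v + r)) = _
    calc Multiset.count (⟨j % (m * n + 1), Nat.mod_lt _ (hNpos m n)⟩ : Fin (m * n + 1))
          (s.1.map (fun v => v + r))
        = Multiset.count ((fun v : Fin (m * n + 1) => v + r)
            ((⟨j % (m * n + 1), Nat.mod_lt _ (hNpos m n)⟩ : Fin (m * n + 1)) - r))
            (s.1.map (fun v => v + r)) := by rw [← h2]
      _ = _ := Multiset.count_map_eq_count' _ _ hinj _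
  have h4 : (m * n + 1 - r.val + j % (m * n + 1)) % (m * n + 1)
      = (j + (m * n + 1 - r.val)) % (m * n + 1) := by
    conv_lhs => rw [Nat.add_mod]
    conv_rhs => rw [Nat.add_mod]
    rw [Nat.add_comm, Nat.mod_mod_of_dvd _ dvd_rfl]
  rw [h1]
  unfold cntS
  congr 1
  refine Fin.ext ?_
  rw [Fin.sub_def]
  exact h4

private def goodS (s : Sym (Fin (m * n + 1)) n) : Prop := GoodCL m n (cntS m n s) 0

private lemma Sps_congr (c c' : ℕ → ℕ) (r r' t : ℕ) (h : ∀ i, c (r + i) = c' (r' + i)) :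
    Sps c r t = Sps c' r' t :=
  Finset.sum_congr rfl fun i _ => h i

private lemma goodS_rotS_iff (r : Fin (m * n + 1)) (s : Sym (Fin (m * n + 1)) n) :
    goodS m n (rotS m n r s) ↔
      GoodCL m n (cntS m n s) ((m * n + 1 - r.val) % (m * n + 1)) := by
  have hS : ∀ t, Sps (cntS m n (rotS m n r s)) 0 t
      = Sps (cntS m n s) ((m * n + 1 - r.val) % (m * n + 1)) t := by
    intro t
    refine Sps_congr _ _ _ _ _ fun i => ?_
    rw [cntS_rotS]
    refine cntS_congr m n s ?_
    conv_lhs => rw [Nat.zero_add, Nat.add_comm, Nat.add_mod]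
    conv_rhs => rw [Nat.add_comm, Nat.add_mod, Nat.mod_mod_of_dvd _ dvd_rfl]
    rw [Nat.add_comm]
  unfold goodS GoodCL
  exact forall_congr' fun t => by rw [hS]

private lemma sub_mod_invol (N a : ℕ) (ha : a < N) :
    (N - (N - a) % N) % N = a := by
  rcases Nat.eq_zero_or_pos a with h | h
  · subst h
    simp [Nat.mod_self]
  · have h1 : N - a < N := by omega
    rw [Nat.mod_eq_of_lt h1]
    have h2 : N - (N - a) = a := by omega
    rw [h2, Nat.mod_eq_of_lt ha]

private lemma existsUnique_rot (s : Sym (Fin (m * n + 1)) n) :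
    ∃! r : Fin (m * n + 1), goodS m n (rotS m n r s) := by
  obtain ⟨b, ⟨hbN, hbG⟩, huniq⟩ :=
    cycle_lemma m n (cntS m n s) (cntS_period m n s) (cntS_sum m n s)
  refine ⟨⟨(m * n + 1 - b) % (m * n + 1), Nat.mod_lt _ (hNpos m n)⟩, ?_, ?_⟩
  · show goodS m n (rotS m n _ s)
    rw [goodS_rotS_iff]
    simpa [sub_mod_invol _ _ hbN] using hbG
  · intro r hr
    rw [goodS_rotS_iff] at hr
    have h1 : (m * n + 1 - r.val) % (m * n + 1) = b :=
      huniq _ ⟨Nat.mod_lt _ (hNpos m n), hr⟩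
    refine Fin.ext ?_
    show r.val = (m * n + 1 - b) % (m * n + 1)
    rw [← h1, sub_mod_invol _ _ r.isLt]

private lemma rot_cancel (r : Fin (m * n + 1)) (s : Sym (Fin (m * n + 1)) n) :
    rotS m n (-r) (rotS m n r s) = s := by
  refine Subtype.ext ?_
  show (s.1.map (fun v => v + r)).map (fun v => v + (-r)) = s.1
  rw [Multiset.map_map]
  have h : ((fun v : Fin (m * n + 1) => v + (-r)) ∘ (fun v => v + r)) = id := by
    funext v
    show v + r + (-r) = v
    abel
  rw [h, Multiset.map_id]

private lemma card_good_mul :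
    (m * n + 1) * ((univ : Finset (Sym (Fin (m * n + 1)) n)).filter (goodS m n)).card
      = Fintype.card (Sym (Fin (m * n + 1)) n) := by
  have hbij : ((univ : Finset (Fin (m * n + 1))) ×ˢ
      ((univ : Finset (Sym (Fin (m * n + 1)) n)).filter (goodS m n))).card
      = (univ : Finset (Sym (Fin (m * n + 1)) n)).card := by
    refine Finset.card_bij (fun p _ => rotS m n p.1 p.2) (fun a ha => Finset.mem_univ _) ?_ ?_
    · rintro ⟨r₁, s₁⟩ h₁ ⟨r₂, s₂⟩ h₂ heq
      simp only [Finset.mem_product, Finset.mem_filter] at h₁ h₂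
      dsimp only at heq
      have hg₁ : goodS m n s₁ := h₁.2.2
      have hg₂ : goodS m n s₂ := h₂.2.2
      have e₁ : s₁ = rotS m n (-r₁) (rotS m n r₂ s₂) := by rw [← heq, rot_cancel]
      have e₂ : s₂ = rotS m n (-r₂) (rotS m n r₂ s₂) := by rw [rot_cancel]
      obtain ⟨r₀, -, huniq⟩ := existsUnique_rot m n (rotS m n r₂ s₂)
      have h₃ : -r₁ = -r₂ := by
        rw [huniq (-r₁) (show goodS m n (rotS m n (-r₁) (rotS m n r₂ s₂)) by
              rw [← e₁]; exact hg₁),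
            huniq (-r₂) (show goodS m n (rotS m n (-r₂) (rotS m n r₂ s₂)) by
              rw [← e₂]; exact hg₂)]
      have h₄ : r₁ = r₂ := by
        have := congrArg Neg.neg h₃; simpa using this
      subst h₄
      have : s₁ = s₂ := by rw [e₁, ← e₂]
      rw [this]
    · intro b _
      obtain ⟨r, hr, -⟩ := existsUnique_rot m n b
      refine ⟨(-r, rotS m n r b), ?_, rot_cancel m n r b⟩
      simp only [Finset.mem_product, Finset.mem_filter]
      exact ⟨Finset.mem_univ _, Finset.mem_univ _, hr⟩
  rw [Finset.card_product, Finset.card_univ, Finset.card_univ, Fintype.card_fin] at hbij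
  exact hbij

-- PART B development
private lemma mem_PK_iff (p : Fin n → ℕ) :
    p ∈ PK m n ↔ Monotone p ∧ ∀ i : Fin n, 1 ≤ p i ∧ p i ≤ m * (i : ℕ) + 1 := by
  unfold PK BSeq
  rw [Set.Finite.mem_toFinset]
  rfl

private def psiF (p : Fin n → ℕ) (i : Fin n) : Fin (m * n + 1) :=
  ⟨(p i - 1) % (m * n + 1), Nat.mod_lt _ (hNpos m n)⟩

private def psi (p : Fin n → ℕ) : Sym (Fin (m * n + 1)) n :=
  ⟨Multiset.map (psiF m n p) Finset.univ.val, by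
    rw [Multiset.card_map]
    exact Finset.card_fin n⟩

private def Fps {n : ℕ} (p : Fin n → ℕ) (t : ℕ) : ℕ :=
  (univ.filter (fun i : Fin n => p i ≤ t)).card

private lemma cntS_psi (p : Fin n → ℕ) (hb : ∀ i : Fin n, 1 ≤ p i ∧ p i ≤ m * n + 1)
    (j : ℕ) (hj : j < m * n + 1) :
    cntS m n (psi m n p) j = (univ.filter (fun i : Fin n => p i - 1 = j)).card := by
  unfold cntS psi
  rw [Multiset.count_map]
  have h1 : ∀ i : Fin n, ((⟨j % (m * n + 1), Nat.mod_lt _ (hNpos m n)⟩ : Fin (m * n + 1))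
      = psiF m n p i) ↔ (p i - 1 = j) := by
    intro i
    have hpi : p i - 1 < m * n + 1 := by have := (hb i).2; omega
    unfold psiF
    rw [Fin.mk.injEq, Nat.mod_eq_of_lt hj, Nat.mod_eq_of_lt hpi]
    omega
  rw [Multiset.filter_congr (fun i _ => h1 i)]
  rw [← Finset.filter_val]
  rfl

private lemma Sps_psi (p : Fin n → ℕ) (hb : ∀ i : Fin n, 1 ≤ p i ∧ p i ≤ m * n + 1)
    (t : ℕ) (ht : t ≤ m * n + 1) :
    Sps (cntS m n (psi m n p)) 0 t = Fps p t := by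
  have h1 : Sps (cntS m n (psi m n p)) 0 t
      = ∑ j ∈ range t, (univ.filter (fun i : Fin n => p i - 1 = j)).card := by
    refine Finset.sum_congr rfl fun j hj => ?_
    rw [Nat.zero_add]
    exact cntS_psi m n p hb j (lt_of_lt_of_le (mem_range.1 hj) ht)
  have h2 : (univ.filter (fun i : Fin n => p i - 1 < t)).card
      = ∑ j ∈ range t, ((univ.filter (fun i : Fin n => p i - 1 < t)).filter
          (fun i => p i - 1 = j)).card := by
    refine Finset.card_eq_sum_card_fiberwise fun i hi => ?_
    exact mem_range.2 (mem_filter.1 hi).2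
  have h3 : ∀ j ∈ range t, ((univ.filter (fun i : Fin n => p i - 1 < t)).filter
      (fun i => p i - 1 = j)) = univ.filter (fun i : Fin n => p i - 1 = j) := by
    intro j hj
    rw [Finset.filter_filter]
    refine Finset.filter_congr fun i _ => ?_
    have := mem_range.1 hj
    constructor
    · rintro ⟨-, h⟩; exact h
    · intro h; exact ⟨by omega, h⟩
  have h4 : (univ.filter (fun i : Fin n => p i - 1 < t)) = univ.filter (fun i : Fin n => p i ≤ t) := by
    refine Finset.filter_congr fun i _ => ?_
    have := (hb i).1
    omega
  have h5 : ∑ j ∈ range t, (univ.filter (fun i : Fin n => p i - 1 = j)).card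
      = (univ.filter (fun i : Fin n => p i - 1 < t)).card := by
    rw [h2]
    exact (Finset.sum_congr rfl fun j hj => by rw [h3 j hj]).symm
  rw [h1, h5, h4]
  rfl

private lemma mono_le_iff {n : ℕ} (p : Fin n → ℕ) (hmono : Monotone p) (i : Fin n) (t : ℕ) :
    p i ≤ t ↔ (i : ℕ) + 1 ≤ Fps p t := by
  constructor
  · intro h
    have hsub : Finset.Iic i ⊆ univ.filter (fun j => p j ≤ t) := by
      intro j hj
      exact mem_filter.2 ⟨mem_univ _, le_trans (hmono (Finset.mem_Iic.1 hj)) h⟩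
    calc (i : ℕ) + 1 = (Finset.Iic i).card := (Fin.card_Iic i).symm
    _ ≤ _ := Finset.card_le_card hsub
  · intro h
    by_contra hc
    push_neg at hc
    have hsub : univ.filter (fun j => p j ≤ t) ⊆ Finset.Iio i := by
      intro j hj
      rw [Finset.mem_Iio]
      by_contra hji
      push_neg at hji
      have h5 := hmono hji
      have h6 := (mem_filter.1 hj).2
      omega
    have h7 := Finset.card_le_card hsub
    rw [Fin.card_Iio] at h7
    unfold Fps at h
    omega

private lemma goodS_psi (p : Fin n → ℕ) (hp : p ∈ PK m n) : goodS m n (psi m n p) := by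
  obtain ⟨hmono, hb⟩ := (mem_PK_iff m n p).1 hp
  have hb' : ∀ i : Fin n, 1 ≤ p i ∧ p i ≤ m * n + 1 := by
    intro i
    have h1 := (hb i).2
    have h2 : m * (i : ℕ) ≤ m * n := Nat.mul_le_mul_left m (le_of_lt i.isLt)
    exact ⟨(hb i).1, by omega⟩
  unfold goodS GoodCL
  intro t h1 h2
  rw [Sps_psi m n p hb' t (by omega)]
  rcases lt_or_ge (Fps p t) n with h | h
  · set i : Fin n := ⟨Fps p t, h⟩ with hi
    have h3 : ¬ (p i ≤ t) := by
      rw [mono_le_iff p hmono i t]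
      simp [hi]
    have h4 := (hb i).2
    simp only [hi] at h3 h4
    omega
  · have := Nat.mul_le_mul_left m h
    omega

private lemma ofFn_get_of_len {α : Type*} (l : List α) {k : ℕ} (h : l.length = k) :
    List.ofFn (fun i : Fin k => l.get ⟨i.val, h ▸ i.isLt⟩) = l := by
  subst h
  simp

private def sortedOf (s : Sym (Fin (m * n + 1)) n) : List (Fin (m * n + 1)) :=
  Multiset.sort s.1 (· ≤ ·)

private lemma sortedOf_len (s : Sym (Fin (m * n + 1)) n) : (sortedOf m n s).length = n := by
  unfold sortedOf
  rw [Multiset.length_sort, s.2]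

private lemma pOf_isLt (s : Sym (Fin (m * n + 1)) n) (i : Fin n) :
    i.val < (sortedOf m n s).length := by
  rw [sortedOf_len]
  exact i.isLt

private def pOf (s : Sym (Fin (m * n + 1)) n) : Fin n → ℕ := fun i =>
  ((sortedOf m n s).get ⟨i.val, pOf_isLt m n s i⟩).val + 1

private lemma pOf_mono (s : Sym (Fin (m * n + 1)) n) : Monotone (pOf m n s) := by
  intro i j hij
  unfold pOf
  have hs : (sortedOf m n s).Pairwise (· ≤ ·) := Multiset.pairwise_sort _ _
  have := hs.rel_get_of_le (show (⟨i.val, pOf_isLt m n s i⟩ :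
      Fin (sortedOf m n s).length) ≤ ⟨j.val, pOf_isLt m n s j⟩ from hij)
  exact Nat.add_le_add_right this 1

private lemma pOf_bounds (s : Sym (Fin (m * n + 1)) n) :
    ∀ i : Fin n, 1 ≤ pOf m n s i ∧ pOf m n s i ≤ m * n + 1 := by
  intro i
  refine ⟨Nat.le_add_left _ _, ?_⟩
  unfold pOf
  have := ((sortedOf m n s).get ⟨i.val, pOf_isLt m n s i⟩).isLt
  omega

private lemma psi_pOf (s : Sym (Fin (m * n + 1)) n) : psi m n (pOf m n s) = s := by
  refine Subtype.ext ?_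
  show Multiset.map (psiF m n (pOf m n s)) Finset.univ.val = s.1
  have h1 : psiF m n (pOf m n s) = fun i : Fin n =>
      (sortedOf m n s).get ⟨i.val, pOf_isLt m n s i⟩ := by
    funext i
    unfold psiF pOf
    refine Fin.ext ?_
    show (_ + 1 - 1) % (m * n + 1) = _
    rw [Nat.add_sub_cancel]
    exact Nat.mod_eq_of_lt ((sortedOf m n s).get _).isLt
  rw [h1, Fin.univ_val_map, ofFn_get_of_len _ (sortedOf_len m n s)]
  exact Multiset.sort_eq s.1 (fun a b : Fin (m * n + 1) => a ≤ b)

private lemma PK_bounds' (p : Fin n → ℕ) (hp : p ∈ PK m n) :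
    ∀ i : Fin n, 1 ≤ p i ∧ p i ≤ m * n + 1 := by
  intro i
  have hb := ((mem_PK_iff m n p).1 hp).2 i
  have h2 : m * (i : ℕ) ≤ m * n := Nat.mul_le_mul_left m (le_of_lt i.isLt)
  exact ⟨hb.1, by omega⟩

private lemma pOf_mem_PK (s : Sym (Fin (m * n + 1)) n) (hs : goodS m n s) :
    pOf m n s ∈ PK m n := by
  rw [mem_PK_iff]
  refine ⟨pOf_mono m n s, fun i => ⟨(pOf_bounds m n s i).1, ?_⟩⟩
  by_contra hc
  push_neg at hc
  set t := m * (i : ℕ) + 1 with hts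
  have hb := pOf_bounds m n s
  have ht : t ≤ m * n := by
    have := (hb i).2
    omega
  have hgood : t ≤ m * Sps (cntS m n s) 0 t := hs t (by omega) ht
  have hSps : Sps (cntS m n s) 0 t = Fps (pOf m n s) t := by
    conv_lhs => rw [← psi_pOf m n s]
    exact Sps_psi m n (pOf m n s) hb t (by omega)
  have hF : Fps (pOf m n s) t ≤ (i : ℕ) := by
    by_contra hFc
    push_neg at hFc
    have := (mono_le_iff (pOf m n s) (pOf_mono m n s) i t).2 hFc
    omega
  rw [hSps] at hgood
  have := Nat.mul_le_mul_left m hF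
  omega

private lemma card_PK_eq :
    (PK m n).card = ((univ : Finset (Sym (Fin (m * n + 1)) n)).filter (goodS m n)).card := by
  refine Finset.card_bij (fun p _ => psi m n p)
    (fun p hp => mem_filter.2 ⟨mem_univ _, goodS_psi m n p hp⟩) ?_ ?_
  · intro p₁ h₁ p₂ h₂ heq
    have hm₁ := ((mem_PK_iff m n p₁).1 h₁).1
    have hm₂ := ((mem_PK_iff m n p₂).1 h₂).1
    have hb₁ := PK_bounds' m n p₁ h₁
    have hb₂ := PK_bounds' m n p₂ h₂
    have hF : ∀ t, t ≤ m * n + 1 → Fps p₁ t = Fps p₂ t := by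
      intro t ht
      rw [← Sps_psi m n p₁ hb₁ t ht, ← Sps_psi m n p₂ hb₂ t ht, heq]
    funext i
    refine le_antisymm ?_ ?_
    · refine (mono_le_iff p₁ hm₁ i (p₂ i)).2 ?_
      rw [hF (p₂ i) (hb₂ i).2]
      exact (mono_le_iff p₂ hm₂ i (p₂ i)).1 le_rfl
    · refine (mono_le_iff p₂ hm₂ i (p₁ i)).2 ?_
      rw [← hF (p₁ i) (hb₁ i).2]
      exact (mono_le_iff p₁ hm₁ i (p₁ i)).1 le_rfl
  · intro b hb
    exact ⟨pOf m n b, pOf_mem_PK m n b (mem_filter.1 hb).2, psi_pOf m n b⟩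


end SymPart

theorem stmt0 (m : ℕ) (hm : 1 ≤ m) (n : ℕ) :
    (m * n + 1) * (PK m n).card = Nat.choose (m * n + n) n := by
  rw [card_PK_eq m n, card_good_mul m n, Sym.card_sym_eq_choose, Fintype.card_fin]
  congr 1
  omega

end
end

section
/- For all integers n ≥ 0, k ≥ 1 and 0 ≤ r < m−1, the counts h_{n,k,r} satisfy the convolution recurrence h_{n,k,r} = Σ_{j=0}^{n} h_{j,k,r+1} · h_{n−j,1,m−1}. -/
open scoped Classical
open Finset

noncomputable section

/-- The first index `i` (as a natural number) with `b i ≤ p i`, or `n` if none exists. -/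
def firstIdx (b : ℕ → ℕ) {n : ℕ} (p : Fin n → ℕ) : ℕ :=
  if h : (Finset.univ.filter (fun i : Fin n => b (i : ℕ) ≤ p i)).Nonempty then
    (((Finset.univ.filter (fun i : Fin n => b (i : ℕ) ≤ p i)).min' h : Fin n) : ℕ) else n

lemma mem_BSeq {n : ℕ} {b : ℕ → ℕ} {p : Fin n → ℕ} :
    p ∈ BSeq n b ↔ Monotone p ∧ ∀ i : Fin n, 1 ≤ p i ∧ p i ≤ b (i : ℕ) := by
  simp [BSeq, Set.Finite.mem_toFinset, Set.mem_setOf_eq]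

lemma firstIdx_le (b : ℕ → ℕ) {n : ℕ} (p : Fin n → ℕ) : firstIdx b p ≤ n := by
  unfold firstIdx
  split
  · exact Nat.le_of_lt (Fin.is_lt _)
  · exact le_refl n

lemma lt_firstIdx {b : ℕ → ℕ} {n : ℕ} {p : Fin n → ℕ} (i : Fin n)
    (h : (i : ℕ) < firstIdx b p) : p i < b (i : ℕ) := by
  by_contra hc
  push_neg at hc
  have hmem : i ∈ Finset.univ.filter (fun i : Fin n => b (i : ℕ) ≤ p i) := by
    simp [hc]
  have hS : (Finset.univ.filter (fun i : Fin n => b (i : ℕ) ≤ p i)).Nonempty := ⟨i, hmem⟩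
  unfold firstIdx at h
  rw [dif_pos hS] at h
  have := Finset.min'_le _ i hmem
  rw [Fin.le_def] at this
  omega

lemma firstIdx_spec' {b : ℕ → ℕ} {n : ℕ} {p : Fin n → ℕ} (i : Fin n)
    (hi : (i : ℕ) = firstIdx b p) : b (i : ℕ) ≤ p i := by
  unfold firstIdx at hi
  by_cases hS : (Finset.univ.filter (fun i : Fin n => b (i : ℕ) ≤ p i)).Nonempty
  · rw [dif_pos hS] at hi
    have heq : i = (Finset.univ.filter (fun i : Fin n => b (i : ℕ) ≤ p i)).min' hS :=
      Fin.ext hi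
    rw [heq]
    have := Finset.min'_mem _ hS
    simpa using (Finset.mem_filter.mp this).2
  · rw [dif_neg hS] at hi
    have := i.is_lt
    omega

lemma firstIdx_eq {b : ℕ → ℕ} {n : ℕ} {p : Fin n → ℕ} (j : ℕ) (hj : j ≤ n)
    (h1 : ∀ i : Fin n, (i : ℕ) < j → p i < b (i : ℕ))
    (h2 : ∀ h : j < n, b j ≤ p ⟨j, h⟩) : firstIdx b p = j := by
  unfold firstIdx
  by_cases hS : (Finset.univ.filter (fun i : Fin n => b (i : ℕ) ≤ p i)).Nonempty
  · rw [dif_pos hS]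
    set i0 := (Finset.univ.filter (fun i : Fin n => b (i : ℕ) ≤ p i)).min' hS with hi0
    have hmem := Finset.min'_mem _ hS
    rw [← hi0] at hmem
    have hbi0 : b (i0 : ℕ) ≤ p i0 := by simpa using (Finset.mem_filter.mp hmem).2
    have hge : j ≤ (i0 : ℕ) := by
      by_contra hc
      push_neg at hc
      exact absurd hbi0 (not_le.mpr (h1 i0 hc))
    have hjn : j < n := lt_of_le_of_lt hge i0.is_lt
    have hjmem : (⟨j, hjn⟩ : Fin n) ∈
        Finset.univ.filter (fun i : Fin n => b (i : ℕ) ≤ p i) := by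
      simp [h2 hjn]
    have := Finset.min'_le _ _ hjmem
    rw [← hi0, Fin.le_def] at this
    have hcast : ((⟨j, hjn⟩ : Fin n) : ℕ) = j := rfl
    omega
  · rw [dif_neg hS]
    by_contra hc
    have hjn : j < n := by omega
    exact hS ⟨⟨j, hjn⟩, by simp [h2 hjn]⟩
lemma card_fiber (m k r n j : ℕ) (hk : 1 ≤ k) (hr : r < m - 1) (hj : j ≤ n) :
    ((BSeq n (fun i => m * (i + k) - r)).filter
        (fun p => firstIdx (fun i => m * (i + k) - r) p = j)).card
      = hcnt m j k (r + 1) * hcnt m (n - j) 1 (m - 1) := by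
  have hm2 : r + 2 ≤ m := by omega
  have hmul : ∀ i : ℕ, m ≤ m * (i + k) := fun i => by
    calc m = m * 1 := (mul_one m).symm
    _ ≤ m * (i + k) := Nat.mul_le_mul_left m (by omega)
  have hB2 : r + 2 ≤ m * (j + k) := le_trans hm2 (hmul j)
  have hc : (fun i : ℕ => m * (i + 1) - (m - 1)) = (fun i : ℕ => m * i + 1) := by
    funext i
    have : m * (i + 1) = m * i + m := by ring
    omega
  rw [hcnt, hcnt, hc, ← Finset.card_product]
  apply Finset.card_bij'
    (i := fun p _ => ((fun i : Fin j => p ⟨(i : ℕ), lt_of_lt_of_le i.is_lt hj⟩),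
      (fun t : Fin (n - j) => p ⟨j + (t : ℕ), by have := t.is_lt; omega⟩
        - (m * (j + k) - r - 1))))
    (j := fun aq _ => (fun i : Fin n => if h : (i : ℕ) < j then aq.1 ⟨(i : ℕ), h⟩
      else aq.2 ⟨(i : ℕ) - j, by have := i.is_lt; omega⟩ + (m * (j + k) - r - 1)))
  case hi =>
    rintro p hp
    rw [Finset.mem_filter] at hp
    obtain ⟨hpB, hpJ⟩ := hp
    rw [mem_BSeq] at hpB
    obtain ⟨hmono, hbd⟩ := hpB
    rw [Finset.mem_product]
    have hpj : ∀ (h : j < n), p ⟨j, h⟩ = m * (j + k) - r := by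
      intro h
      have h1 := firstIdx_spec' (b := fun i => m * (i + k) - r) ⟨j, h⟩ hpJ.symm
      have h2 := (hbd ⟨j, h⟩).2
      simp only [Fin.val_mk] at h1 h2
      omega
    constructor
    · rw [mem_BSeq]
      refine ⟨?_, ?_⟩
      · intro i1 i2 h12
        exact hmono (by rw [Fin.le_def] at h12 ⊢; exact h12)
      · intro i
        dsimp only
        refine ⟨(hbd _).1, ?_⟩
        have hlt : p ⟨(i : ℕ), lt_of_lt_of_le i.is_lt hj⟩ < m * ((i : ℕ) + k) - r := by
          have := lt_firstIdx (b := fun i => m * (i + k) - r)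
            ⟨(i : ℕ), lt_of_lt_of_le i.is_lt hj⟩ (by rw [hpJ]; exact i.is_lt)
          exact this
        omega
    · rw [mem_BSeq]
      refine ⟨?_, ?_⟩
      · intro t1 t2 h12
        rw [Fin.le_def] at h12
        dsimp only
        have := hmono (a := ⟨j + (t1 : ℕ), by have := t1.is_lt; omega⟩)
          (b := ⟨j + (t2 : ℕ), by have := t2.is_lt; omega⟩)
          (by rw [Fin.le_def]; dsimp only; omega)
        exact Nat.sub_le_sub_right this _
      · intro t
        dsimp only
        have hjn : j < n := by have := t.is_lt; omega
        have hkey : m * (j + k) - r ≤ p ⟨j + (t : ℕ), by have := t.is_lt; omega⟩ := by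
          have := hmono (a := ⟨j, hjn⟩)
            (b := ⟨j + (t : ℕ), by have := t.is_lt; omega⟩)
            (by rw [Fin.le_def]; dsimp only; omega)
          rw [hpj hjn] at this
          exact this
        have h2 := (hbd ⟨j + (t : ℕ), by have := t.is_lt; omega⟩).2
        dsimp only at h2
        have e : m * (j + (t : ℕ) + k) = m * (j + k) + m * (t : ℕ) := by ring
        exact ⟨by omega, by omega⟩
  case hj =>
    rintro ⟨a, q⟩ haq
    rw [Finset.mem_product] at haq
    obtain ⟨ha, hq⟩ := haq
    rw [mem_BSeq] at ha hq
    obtain ⟨hamono, habd⟩ := ha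
    obtain ⟨hqmono, hqbd⟩ := hq
    dsimp only at hamono habd hqmono hqbd
    have hq0 : ∀ (h : j < n), q ⟨0, by omega⟩ = 1 := by
      intro h
      have h1 := (hqbd ⟨0, by omega⟩).1
      have h2 := (hqbd ⟨0, by omega⟩).2
      dsimp only at h1 h2
      omega
    have hub' : ∀ i : Fin j, a i ≤ m * (j + k) - r - 1 := by
      intro i
      have h2 := (habd i).2
      have : m * ((i : ℕ) + k) ≤ m * (j + k) :=
        Nat.mul_le_mul_left m (by have := i.is_lt; omega)
      omega
    rw [Finset.mem_filter]
    constructor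
    · rw [mem_BSeq]
      refine ⟨?_, ?_⟩
      · intro i1 i2 h12
        rw [Fin.le_def] at h12
        dsimp only
        by_cases h1 : (i1 : ℕ) < j
        · by_cases h2 : (i2 : ℕ) < j
          · rw [dif_pos h1, dif_pos h2]
            exact hamono (show (⟨(i1 : ℕ), h1⟩ : Fin j) ≤ ⟨(i2 : ℕ), h2⟩ by
              rw [Fin.le_def]; exact h12)
          · rw [dif_pos h1, dif_neg h2]
            have hu := hub' ⟨(i1 : ℕ), h1⟩
            have hq1 := (hqbd ⟨(i2 : ℕ) - j, by have := i2.is_lt; omega⟩).1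
            omega
        · have h2 : ¬ (i2 : ℕ) < j := by omega
          rw [dif_neg h1, dif_neg h2]
          have := hqmono (a := ⟨(i1 : ℕ) - j, by have := i1.is_lt; omega⟩)
            (b := ⟨(i2 : ℕ) - j, by have := i2.is_lt; omega⟩)
            (by rw [Fin.le_def]; dsimp only; omega)
          omega
      · intro i
        dsimp only
        by_cases h1 : (i : ℕ) < j
        · rw [dif_pos h1]
          refine ⟨(habd _).1, ?_⟩
          have h2 := (habd ⟨(i : ℕ), h1⟩).2
          simp only [Fin.val_mk] at h2
          have := hmul (i : ℕ)
          omega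
        · rw [dif_neg h1]
          have hq1 := (hqbd ⟨(i : ℕ) - j, by have := i.is_lt; omega⟩).1
          have hq2 := (hqbd ⟨(i : ℕ) - j, by have := i.is_lt; omega⟩).2
          dsimp only at hq2
          have e : m * ((i : ℕ) + k) = m * (j + k) + m * ((i : ℕ) - j) := by
            have h2 : (i : ℕ) = j + ((i : ℕ) - j) := by omega
            calc m * ((i : ℕ) + k) = m * (j + ((i : ℕ) - j) + k) := by rw [← h2]
            _ = m * (j + k) + m * ((i : ℕ) - j) := by ring
          exact ⟨by omega, by omega⟩
    · apply firstIdx_eq j hj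
      · intro i hi
        dsimp only
        rw [dif_pos hi]
        have h2 := (habd ⟨(i : ℕ), hi⟩).2
        simp only [Fin.val_mk] at h2
        have := hmul (i : ℕ)
        omega
      · intro h
        dsimp only
        have hnlt : ¬ ((⟨j, h⟩ : Fin n) : ℕ) < j := by simp
        rw [dif_neg hnlt]
        have hz : (⟨((⟨j, h⟩ : Fin n) : ℕ) - j, by have := h; dsimp only; omega⟩
            : Fin (n - j)) = ⟨0, by omega⟩ := Fin.ext (by simp)
        rw [hz, hq0 h]
        omega
  case left_inv =>
    rintro p hp
    rw [Finset.mem_filter] at hp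
    obtain ⟨hpB, hpJ⟩ := hp
    rw [mem_BSeq] at hpB
    obtain ⟨hmono, hbd⟩ := hpB
    funext i
    dsimp only
    by_cases h1 : (i : ℕ) < j
    · rw [dif_pos h1]
    · rw [dif_neg h1]
      have hjn : j < n := by have := i.is_lt; omega
      have hpj : p ⟨j, hjn⟩ = m * (j + k) - r := by
        have ha := firstIdx_spec' (b := fun i => m * (i + k) - r) ⟨j, hjn⟩ hpJ.symm
        have hb2 := (hbd ⟨j, hjn⟩).2
        simp only [Fin.val_mk] at ha hb2
        omega
      have hidx : ∀ (hh : j + ((i : ℕ) - j) < n),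
          (⟨j + ((i : ℕ) - j), hh⟩ : Fin n) = i := fun hh => Fin.ext (by dsimp only; omega)
      rw [hidx _]
      have hge : m * (j + k) - r ≤ p i := by
        have := hmono (a := ⟨j, hjn⟩) (b := i) (by rw [Fin.le_def]; dsimp only; omega)
        rw [hpj] at this
        exact this
      omega
  case right_inv =>
    rintro ⟨a, q⟩ haq
    refine Prod.ext ?_ ?_
    · funext i
      dsimp only
      have h1 : ((⟨(i : ℕ), lt_of_lt_of_le i.is_lt hj⟩ : Fin n) : ℕ) < j := i.is_lt
      rw [dif_pos h1]
    · funext t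
      dsimp only
      have h1 : ¬ ((⟨j + (t : ℕ), by have := t.is_lt; omega⟩ : Fin n) : ℕ) < j := by
        dsimp only; omega
      rw [dif_neg h1]
      have hidx : ∀ (hh : ((⟨j + (t : ℕ), by have := t.is_lt; omega⟩ : Fin n) : ℕ) - j < n - j),
          (⟨((⟨j + (t : ℕ), by have := t.is_lt; omega⟩ : Fin n) : ℕ) - j, hh⟩ : Fin (n - j)) = t :=
        fun hh => Fin.ext (by dsimp only; omega)
      rw [hidx _]
      omega
theorem stmt2 (m : ℕ) (hm : 1 ≤ m) (n k r : ℕ) (hk : 1 ≤ k) (hr : r < m - 1) :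
    hcnt m n k r = ∑ j ∈ Finset.range (n + 1), hcnt m j k (r + 1) * hcnt m (n - j) 1 (m - 1) := by
  rw [hcnt]
  rw [Finset.card_eq_sum_card_fiberwise (f := firstIdx (fun i => m * (i + k) - r))
    (t := Finset.range (n + 1))
    (fun p _ => Finset.mem_range.mpr
      (by have := firstIdx_le (fun i => m * (i + k) - r) p; omega))]
  exact Finset.sum_congr rfl (fun j hj =>
    card_fiber m k r n j hk hr (by rw [Finset.mem_range] at hj; omega))

end
end

section
/- For all integers n ≥ 0 and k ≥ 0, the number of u-parking distributions p of length n with luck(p) = k equals the number of u-parking distributions p' of length n with ω_1(p') = k. -/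
open scoped Classical
open Finset

noncomputable section

def Sset (m n c : ℕ) : Finset (Fin n → ℕ) := BSeq n (fun i => m * (i + c) + 1)
def luckc (m c : ℕ) {n : ℕ} (p : Fin n → ℕ) : ℕ :=
  (Finset.univ.filter (fun i : Fin n => p i = m * ((i : ℕ) + c) + 1)).card
lemma mem_Sset {m n c : ℕ} {p : Fin n → ℕ} :
    p ∈ Sset m n c ↔ Monotone p ∧ ∀ i : Fin n, 1 ≤ p i ∧ p i ≤ m * ((i : ℕ) + c) + 1 :=
  mem_BSeq
def flN (m c : ℕ) {n : ℕ} (p : Fin n → ℕ) : ℕ :=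
  sInf {i | ∃ h : i < n, p ⟨i, h⟩ = m * (i + c) + 1}
def Fdel (m c : ℕ) {n : ℕ} (p : Fin (n + 1) → ℕ) : Fin n → ℕ :=
  fun j => if (j : ℕ) < flN m c p then p j.castSucc else p j.succ
def insN (m c n : ℕ) (q : Fin n → ℕ) : ℕ :=
  sInf {j | j = n ∨ ∃ h : j < n, m * (j + c) + 1 ≤ q ⟨j, h⟩}
lemma insN_le (m c n : ℕ) (q : Fin n → ℕ) : insN m c n q ≤ n :=
  Nat.sInf_le (Or.inl rfl)
def Gins (m c : ℕ) {n : ℕ} (q : Fin n → ℕ) : Fin (n + 1) → ℕ :=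
  fun i =>
    if h : (i : ℕ) < insN m c n q then q ⟨i, lt_of_lt_of_le h (insN_le m c n q)⟩
    else if h2 : (i : ℕ) = insN m c n q then m * ((i : ℕ) + c) + 1
    else q ⟨(i : ℕ) - 1, by have := i.isLt; omega⟩

-- basic spec lemmas
lemma flN_mem {m c n : ℕ} {p : Fin n → ℕ} (h : 1 ≤ luckc m c p) :
    ∃ hh : flN m c p < n, p ⟨flN m c p, hh⟩ = m * (flN m c p + c) + 1 := by
  apply Nat.sInf_mem (s := {i | ∃ h : i < n, p ⟨i, h⟩ = m * (i + c) + 1})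
  rw [luckc] at h
  obtain ⟨i, hi⟩ := Finset.card_pos.mp h
  exact ⟨(i : ℕ), i.isLt, by simpa using (Finset.mem_filter.mp hi).2⟩

lemma flN_min {m c n : ℕ} {p : Fin n → ℕ} {i : ℕ} (hi : i < flN m c p) (hn : i < n) :
    p ⟨i, hn⟩ ≠ m * (i + c) + 1 := by
  intro heq
  exact Nat.notMem_of_lt_sInf hi ⟨hn, heq⟩

lemma flN_le {m c n : ℕ} {p : Fin n → ℕ} {i : ℕ} (hn : i < n)
    (h : p ⟨i, hn⟩ = m * (i + c) + 1) : flN m c p ≤ i :=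
  Nat.sInf_le ⟨hn, h⟩

lemma insN_min {m c n : ℕ} {q : Fin n → ℕ} {j : ℕ} (hj : j < insN m c n q) :
    ∃ h : j < n, q ⟨j, h⟩ < m * (j + c) + 1 := by
  have h2 := Nat.notMem_of_lt_sInf hj
  have hle := insN_le m c n q
  simp only [Set.mem_setOf_eq, not_or, not_exists, not_le] at h2
  exact ⟨by omega, h2.2 (by omega)⟩

lemma insN_spec {m c n : ℕ} {q : Fin n → ℕ} (h : insN m c n q < n) :
    m * (insN m c n q + c) + 1 ≤ q ⟨insN m c n q, h⟩ := by
  have hmem : insN m c n q ∈ {j | j = n ∨ ∃ h : j < n, m * (j + c) + 1 ≤ q ⟨j, h⟩} :=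
    Nat.sInf_mem ⟨n, Or.inl rfl⟩
  rcases hmem with h1 | ⟨h1, h2⟩
  · exact absurd h1 (by omega)
  · exact h2

lemma insN_le_of_ge {m c n : ℕ} {q : Fin n → ℕ} {j : ℕ} (hn : j < n)
    (h : m * (j + c) + 1 ≤ q ⟨j, hn⟩) : insN m c n q ≤ j :=
  Nat.sInf_le (Or.inr ⟨hn, h⟩)

lemma Fdel_mem {m c n k : ℕ} (hm : 1 ≤ m) {p : Fin (n + 1) → ℕ}
    (hp : p ∈ Sset m (n + 1) c) (hl : k + 1 ≤ luckc m c p) :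
    Fdel m c p ∈ Sset m n (c + 1) ∧ k ≤ luckc m (c + 1) (Fdel m c p) := by
  obtain ⟨mono, bnd⟩ := mem_Sset.mp hp
  have h1 : 1 ≤ luckc m c p := by omega
  obtain ⟨hlt, hlucky⟩ := flN_mem h1
  set i0 := flN m c p with hi0
  have hmono : Monotone (Fdel m c p) := by
    intro a b hab
    have hab' : (a : ℕ) ≤ (b : ℕ) := hab
    unfold Fdel
    split <;> split <;> (apply mono; simp only [Fin.le_def, Fin.coe_castSucc, Fin.val_succ]) <;>
      omega
  have hbnd : ∀ j : Fin n, 1 ≤ Fdel m c p j ∧ Fdel m c p j ≤ m * ((j : ℕ) + (c + 1)) + 1 := by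
    intro j
    unfold Fdel
    split
    · refine ⟨(bnd j.castSucc).1, le_trans (bnd j.castSucc).2 ?_⟩
      have := Nat.mul_le_mul_left m (show ((j.castSucc : ℕ) + c) ≤ ((j : ℕ) + (c + 1)) by
        simp only [Fin.coe_castSucc]; omega)
      omega
    · refine ⟨(bnd j.succ).1, le_trans (bnd j.succ).2 ?_⟩
      have : ((j.succ : ℕ) + c) = ((j : ℕ) + (c + 1)) := by
        simp only [Fin.val_succ]; omega
      rw [this]
  have hmem : Fdel m c p ∈ Sset m n (c + 1) := mem_Sset.mpr ⟨hmono, hbnd⟩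
  refine ⟨hmem, ?_⟩
  -- the lucky count
  have hkey : ((Finset.univ.filter fun i : Fin (n + 1) =>
        p i = m * ((i : ℕ) + c) + 1).erase ⟨i0, hlt⟩).card
      ≤ ((Finset.univ.filter fun j : Fin n =>
        Fdel m c p j = m * ((j : ℕ) + (c + 1)) + 1).image Fin.val).card := by
    refine Finset.card_le_card_of_injOn (fun i => (i : ℕ) - 1) ?_ ?_
    · intro i hi
      obtain ⟨hne, hif⟩ := Finset.mem_erase.mp hi
      have hlucky_i : p i = m * ((i : ℕ) + c) + 1 := (Finset.mem_filter.mp hif).2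
      have hge : i0 < (i : ℕ) := by
        have h1 : i0 ≤ (i : ℕ) := flN_le i.isLt (by simpa using hlucky_i)
        rcases Nat.eq_or_lt_of_le h1 with h2 | h2
        · exact absurd (Fin.ext h2.symm : i = ⟨i0, hlt⟩) hne
        · exact h2
      have hjlt : (i : ℕ) - 1 < n := by have := i.isLt; omega
      refine Finset.mem_image.mpr ⟨⟨(i : ℕ) - 1, hjlt⟩, Finset.mem_filter.mpr ⟨Finset.mem_univ _, ?_⟩, rfl⟩
      have hnotlt : ¬ (((⟨(i : ℕ) - 1, hjlt⟩ : Fin n) : ℕ) < i0) := by simp; omega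
      rw [Fdel, if_neg hnotlt]
      have hsucc : (⟨(i : ℕ) - 1, hjlt⟩ : Fin n).succ = i := by
        apply Fin.ext; simp only [Fin.val_succ]; omega
      rw [hsucc, hlucky_i]
      show m * ((i : ℕ) + c) + 1 = m * (((i : ℕ) - 1) + (c + 1)) + 1
      congr 2
      omega
    · intro a ha b hb hab
      obtain ⟨hnea, hifa⟩ := Finset.mem_erase.mp ha
      obtain ⟨hneb, hifb⟩ := Finset.mem_erase.mp hb
      have ha1 : 1 ≤ (a : ℕ) := by
        have h1 : i0 ≤ (a : ℕ) := flN_le a.isLt (by simpa using (Finset.mem_filter.mp hifa).2)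
        rcases Nat.eq_or_lt_of_le h1 with h2 | h2
        · exact absurd (Fin.ext h2.symm : a = ⟨i0, hlt⟩) hnea
        · omega
      have hb1 : 1 ≤ (b : ℕ) := by
        have h1 : i0 ≤ (b : ℕ) := flN_le b.isLt (by simpa using (Finset.mem_filter.mp hifb).2)
        rcases Nat.eq_or_lt_of_le h1 with h2 | h2
        · exact absurd (Fin.ext h2.symm : b = ⟨i0, hlt⟩) hneb
        · omega
      simp only at hab
      exact Fin.ext (by omega)
  have hm0 : (⟨i0, hlt⟩ : Fin (n + 1)) ∈ (Finset.univ.filter fun i : Fin (n + 1) =>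
      p i = m * ((i : ℕ) + c) + 1) := Finset.mem_filter.mpr ⟨Finset.mem_univ _, hlucky⟩
  rw [Finset.card_erase_of_mem hm0] at hkey
  rw [Finset.card_image_of_injective _ Fin.val_injective] at hkey
  rw [luckc] at hl ⊢
  omega

lemma Gins_apply_lt {m c n : ℕ} (q : Fin n → ℕ) {i : Fin (n + 1)}
    (h : (i : ℕ) < insN m c n q) (hn : (i : ℕ) < n) :
    Gins m c q i = q ⟨i, hn⟩ := by
  unfold Gins; rw [dif_pos h]

lemma Gins_apply_eq {m c n : ℕ} (q : Fin n → ℕ) {i : Fin (n + 1)}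
    (h : (i : ℕ) = insN m c n q) :
    Gins m c q i = m * ((i : ℕ) + c) + 1 := by
  unfold Gins; rw [dif_neg (by omega), dif_pos h]

lemma Gins_apply_gt {m c n : ℕ} (q : Fin n → ℕ) {i : Fin (n + 1)}
    (h : insN m c n q < (i : ℕ)) (hn : (i : ℕ) - 1 < n) :
    Gins m c q i = q ⟨(i : ℕ) - 1, hn⟩ := by
  unfold Gins; rw [dif_neg (by omega), dif_neg (by omega)]

lemma Gins_mem {m c n k : ℕ} (hm : 1 ≤ m) {q : Fin n → ℕ}
    (hq : q ∈ Sset m n (c + 1)) (hl : k ≤ luckc m (c + 1) q) :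
    Gins m c q ∈ Sset m (n + 1) c ∧ k + 1 ≤ luckc m c (Gins m c q) := by
  obtain ⟨mono, bnd⟩ := mem_Sset.mp hq
  set I := insN m c n q with hI
  have hIle : I ≤ n := insN_le m c n q
  have hmono : Monotone (Gins m c q) := by
    intro a b hab
    have hab' : (a : ℕ) ≤ (b : ℕ) := hab
    rcases lt_trichotomy ((a : ℕ)) I with ha | ha | ha
    · have hna : (a : ℕ) < n := by omega
      obtain ⟨_, hqa⟩ := insN_min (m := m) (c := c) ha
      rw [Gins_apply_lt q ha hna]
      rcases lt_trichotomy ((b : ℕ)) I with hb | hb | hb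
      · rw [Gins_apply_lt q hb (by omega)]
        exact mono (show ((⟨(a : ℕ), hna⟩ : Fin n)) ≤ ⟨(b : ℕ), by omega⟩ from hab')
      · rw [Gins_apply_eq q hb]
        have := Nat.mul_le_mul_left m (show (a : ℕ) + c ≤ (b : ℕ) + c by omega)
        omega
      · have hnb : (b : ℕ) - 1 < n := by have := b.isLt; omega
        rw [Gins_apply_gt q hb hnb]
        exact mono (show ((⟨(a : ℕ), hna⟩ : Fin n)) ≤ ⟨(b : ℕ) - 1, hnb⟩ from by
          simp only [Fin.le_def]; omega)
    · rw [Gins_apply_eq q ha]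
      rcases lt_trichotomy ((b : ℕ)) I with hb | hb | hb
      · omega
      · rw [Gins_apply_eq q hb]
        have := Nat.mul_le_mul_left m (show (a : ℕ) + c ≤ (b : ℕ) + c by omega)
        omega
      · have hnb : (b : ℕ) - 1 < n := by have := b.isLt; omega
        rw [Gins_apply_gt q hb hnb]
        have hIn : I < n := by omega
        have h1 := insN_spec (m := m) (c := c) hIn
        have h2 : q ⟨I, hIn⟩ ≤ q ⟨(b : ℕ) - 1, hnb⟩ :=
          mono (show ((⟨I, hIn⟩ : Fin n)) ≤ ⟨(b : ℕ) - 1, hnb⟩ from by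
            simp only [Fin.le_def]; omega)
        calc m * ((a : ℕ) + c) + 1 = m * (I + c) + 1 := by rw [ha]
          _ ≤ _ := le_trans h1 h2
    · have hna : (a : ℕ) - 1 < n := by have := a.isLt; omega
      have hnb : (b : ℕ) - 1 < n := by have := b.isLt; omega
      rw [Gins_apply_gt q ha hna, Gins_apply_gt q (by omega) hnb]
      exact mono (show ((⟨(a : ℕ) - 1, hna⟩ : Fin n)) ≤ ⟨(b : ℕ) - 1, hnb⟩ from by
        simp only [Fin.le_def]; omega)
  have hbnd : ∀ i : Fin (n + 1), 1 ≤ Gins m c q i ∧ Gins m c q i ≤ m * ((i : ℕ) + c) + 1 := by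
    intro i
    rcases lt_trichotomy ((i : ℕ)) I with h | h | h
    · obtain ⟨hn2, hqi⟩ := insN_min (m := m) (c := c) h
      rw [Gins_apply_lt q h hn2]
      exact ⟨(bnd _).1, by omega⟩
    · rw [Gins_apply_eq q h]
      omega
    · have hn2 : (i : ℕ) - 1 < n := by have := i.isLt; omega
      rw [Gins_apply_gt q h hn2]
      refine ⟨(bnd _).1, le_trans (bnd _).2 ?_⟩
      have : ((⟨(i : ℕ) - 1, hn2⟩ : Fin n) : ℕ) + (c + 1) = (i : ℕ) + c := by
        simp only []; omega
      rw [this]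
  refine ⟨mem_Sset.mpr ⟨hmono, hbnd⟩, ?_⟩
  have hImem : (⟨I, by omega⟩ : Fin (n + 1)) ∈ (Finset.univ.filter fun i : Fin (n + 1) =>
      Gins m c q i = m * ((i : ℕ) + c) + 1) :=
    Finset.mem_filter.mpr ⟨Finset.mem_univ _, Gins_apply_eq q rfl⟩
  have hkey : (Finset.univ.filter fun j : Fin n =>
        q j = m * ((j : ℕ) + (c + 1)) + 1).card
      ≤ ((Finset.univ.filter fun i : Fin (n + 1) =>
        Gins m c q i = m * ((i : ℕ) + c) + 1).erase ⟨I, by omega⟩).card := by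
    refine Finset.card_le_card_of_injOn Fin.succ ?_ ?_
    · intro j hj
      have hlj : q j = m * ((j : ℕ) + (c + 1)) + 1 := (Finset.mem_filter.mp hj).2
      have hIj : I ≤ (j : ℕ) := by
        refine insN_le_of_ge j.isLt ?_
        have := Nat.mul_le_mul_left m (show (j : ℕ) + c ≤ (j : ℕ) + (c + 1) by omega)
        have : q ⟨(j : ℕ), j.isLt⟩ = q j := by congr
        omega
      refine Finset.mem_erase.mpr ⟨?_, Finset.mem_filter.mpr ⟨Finset.mem_univ _, ?_⟩⟩
      · intro hcon
        have : (j : ℕ) + 1 = I := by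
          have := congrArg Fin.val hcon
          simpa using this
        omega
      · have hgt : I < ((j.succ : Fin (n + 1)) : ℕ) := by simp only [Fin.val_succ]; omega
        have hn2 : ((j.succ : Fin (n + 1)) : ℕ) - 1 < n := by simp only [Fin.val_succ]; omega
        rw [Gins_apply_gt q hgt hn2]
        have he : (⟨((j.succ : Fin (n + 1)) : ℕ) - 1, hn2⟩ : Fin n) = j := by
          apply Fin.ext; simp [Fin.val_succ]
        rw [he, hlj]
        show m * ((j : ℕ) + (c + 1)) + 1 = m * (((j.succ : Fin (n + 1)) : ℕ) + c) + 1
        congr 2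
        simp [Fin.val_succ]
        omega
    · intro a _ b _ hab
      exact Fin.succ_injective _ hab
  rw [Finset.card_erase_of_mem hImem] at hkey
  have hpos : 1 ≤ (Finset.univ.filter fun i : Fin (n + 1) =>
      Gins m c q i = m * ((i : ℕ) + c) + 1).card := Finset.card_pos.mpr ⟨_, hImem⟩
  rw [luckc] at hl ⊢
  omega

lemma Fdel_apply_lt {m c n : ℕ} {p : Fin (n + 1) → ℕ} {j : Fin n}
    (h : (j : ℕ) < flN m c p) : Fdel m c p j = p j.castSucc := if_pos h

lemma Fdel_apply_ge {m c n : ℕ} {p : Fin (n + 1) → ℕ} {j : Fin n}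
    (h : ¬ (j : ℕ) < flN m c p) : Fdel m c p j = p j.succ := if_neg h

lemma insN_Fdel {m c n : ℕ} {p : Fin (n + 1) → ℕ} (hp : p ∈ Sset m (n + 1) c)
    (h : 1 ≤ luckc m c p) :
    insN m c n (Fdel m c p) = flN m c p := by
  obtain ⟨mono, bnd⟩ := mem_Sset.mp hp
  obtain ⟨hlt, hlucky⟩ := flN_mem h
  apply le_antisymm
  · by_cases hn : flN m c p = n
    · rw [hn]; exact insN_le m c n _
    · have hi0n : flN m c p < n := by omega
      apply insN_le_of_ge hi0n
      have he : Fdel m c p ⟨flN m c p, hi0n⟩ = p (⟨flN m c p, hi0n⟩ : Fin n).succ :=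
        Fdel_apply_ge (by simp)
      rw [he]
      calc m * (flN m c p + c) + 1 = p ⟨flN m c p, hlt⟩ := hlucky.symm
        _ ≤ p (⟨flN m c p, hi0n⟩ : Fin n).succ := mono (by simp [Fin.le_def])
  · by_contra hcon
    push_neg at hcon
    have hIn : insN m c n (Fdel m c p) < n := by omega
    have hspec := insN_spec hIn
    have he : Fdel m c p ⟨insN m c n (Fdel m c p), hIn⟩
        = p ⟨insN m c n (Fdel m c p), by omega⟩ := by
      rw [Fdel_apply_lt (by simpa using hcon)]
      congr 1
    rw [he] at hspec
    have hne := flN_min hcon (show insN m c n (Fdel m c p) < n + 1 by omega)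
    have hb := (bnd ⟨insN m c n (Fdel m c p), by omega⟩).2
    simp only at hb
    omega

lemma Gins_Fdel {m c n : ℕ} {p : Fin (n + 1) → ℕ} (hp : p ∈ Sset m (n + 1) c)
    (h : 1 ≤ luckc m c p) :
    Gins m c (Fdel m c p) = p := by
  obtain ⟨hlt, hlucky⟩ := flN_mem h
  have hins := insN_Fdel hp h
  funext i
  rcases lt_trichotomy ((i : ℕ)) (flN m c p) with hil | hil | hil
  · have hn2 : (i : ℕ) < n := by omega
    rw [Gins_apply_lt (Fdel m c p) (by omega) hn2]
    rw [Fdel_apply_lt (by simpa using hil)]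
    congr 1
  · rw [Gins_apply_eq (Fdel m c p) (by omega)]
    have hie : i = ⟨flN m c p, hlt⟩ := Fin.ext hil
    rw [hie, hlucky]
  · have hn2 : (i : ℕ) - 1 < n := by have := i.isLt; omega
    rw [Gins_apply_gt (Fdel m c p) (by omega) hn2]
    rw [Fdel_apply_ge (by simp; omega)]
    congr 1
    apply Fin.ext
    simp only [Fin.val_succ]
    omega

lemma flN_Gins {m c n : ℕ} {q : Fin n → ℕ} (hq : q ∈ Sset m n (c + 1)) :
    flN m c (Gins m c q) = insN m c n q := by
  have hIle : insN m c n q ≤ n := insN_le m c n q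
  apply le_antisymm
  · exact flN_le (by omega) (Gins_apply_eq q rfl)
  · by_contra hcon
    push_neg at hcon
    have hne : {i | ∃ h : i < n + 1, Gins m c q ⟨i, h⟩ = m * (i + c) + 1}.Nonempty :=
      ⟨insN m c n q, by omega, Gins_apply_eq q rfl⟩
    have hmem : flN m c (Gins m c q) ∈
        {i | ∃ h : i < n + 1, Gins m c q ⟨i, h⟩ = m * (i + c) + 1} := Nat.sInf_mem hne
    obtain ⟨h1, h2⟩ := hmem
    obtain ⟨h3, h4⟩ := insN_min (m := m) (c := c) hcon
    rw [Gins_apply_lt q (by simpa using hcon) (by simpa using h3)] at h2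
    simp only at h2 h4
    omega

lemma Fdel_Gins {m c n : ℕ} {q : Fin n → ℕ} (hq : q ∈ Sset m n (c + 1)) :
    Fdel m c (Gins m c q) = q := by
  have hfl := flN_Gins hq
  funext j
  by_cases hj : (j : ℕ) < flN m c (Gins m c q)
  · rw [Fdel_apply_lt hj]
    rw [Gins_apply_lt q (by rw [← hfl]; simpa using hj) (by simp)]
    congr 1
  · rw [Fdel_apply_ge hj]
    have hgt : insN m c n q < ((j.succ : Fin (n + 1)) : ℕ) := by
      rw [← hfl]; simp only [Fin.val_succ]; omega
    rw [Gins_apply_gt q hgt (by simp only [Fin.val_succ]; omega)]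
    congr 1

lemma step (m : ℕ) (hm : 1 ≤ m) (c n k : ℕ) :
    ((Sset m (n + 1) c).filter (fun p => k + 1 ≤ luckc m c p)).card
      = ((Sset m n (c + 1)).filter (fun q => k ≤ luckc m (c + 1) q)).card := by
  refine Finset.card_bij' (fun p _ => Fdel m c p) (fun q _ => Gins m c q) ?_ ?_ ?_ ?_
  · intro p hp
    obtain ⟨h1, h2⟩ := Finset.mem_filter.mp hp
    obtain ⟨h3, h4⟩ := Fdel_mem hm h1 h2
    exact Finset.mem_filter.mpr ⟨h3, h4⟩
  · intro q hq
    obtain ⟨h1, h2⟩ := Finset.mem_filter.mp hq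
    obtain ⟨h3, h4⟩ := Gins_mem hm h1 h2
    exact Finset.mem_filter.mpr ⟨h3, h4⟩
  · intro p hp
    obtain ⟨h1, h2⟩ := Finset.mem_filter.mp hp
    exact Gins_Fdel h1 (by omega)
  · intro q hq
    obtain ⟨h1, _⟩ := Finset.mem_filter.mp hq
    exact Fdel_Gins h1

lemma cardGE (m : ℕ) (hm : 1 ≤ m) :
    ∀ (k c n : ℕ), k ≤ n →
      ((Sset m n c).filter (fun p => k ≤ luckc m c p)).card
        = (Sset m (n - k) (c + k)).card := by
  intro k
  induction k with
  | zero =>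
    intro c n _
    simp [Finset.filter_true_of_mem]
  | succ k ih =>
    intro c n hk
    obtain ⟨n', rfl⟩ : ∃ n', n = n' + 1 := ⟨n - 1, by omega⟩
    rw [step m hm c n' k, ih (c + 1) n' (by omega)]
    have e1 : n' - k = n' + 1 - (k + 1) := by omega
    have e2 : c + 1 + k = c + (k + 1) := by omega
    rw [e1, e2]


lemma PK_eq_Sset (m n : ℕ) : PK m n = Sset m n 0 := rfl

lemma luck_eq_luckc {m n : ℕ} (p : Fin n → ℕ) : luck m p = luckc m 0 p := rfl

lemma luckGE (m : ℕ) (hm : 1 ≤ m) (n k : ℕ) (hk : k ≤ n) :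
    ((PK m n).filter (fun p => k ≤ luck m p)).card = (Sset m (n - k) k).card := by
  have h := cardGE m hm k 0 n hk
  rw [zero_add] at h
  exact h

lemma card_filter_lt_eq {n k : ℕ} (hk : k ≤ n) :
    ((Finset.univ : Finset (Fin n)).filter (fun i : Fin n => (i : ℕ) < k)).card = k := by
  have himg : ((Finset.univ : Finset (Fin n)).filter (fun i : Fin n => (i : ℕ) < k)).image Fin.val
      = Finset.range k := by
    ext a
    simp only [Finset.mem_image, Finset.mem_filter, Finset.mem_range, Finset.mem_univ,
      true_and]
    constructor
    · rintro ⟨i, hi, rfl⟩; exact hi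
    · intro ha; exact ⟨⟨a, by omega⟩, ha, rfl⟩
  have := congrArg Finset.card himg
  rw [Finset.card_image_of_injective _ Fin.val_injective, Finset.card_range] at this
  exact this

lemma ones_prefix {n : ℕ} {p : Fin n → ℕ} (mono : Monotone p)
    (bnd : ∀ i : Fin n, 1 ≤ p i) {k : ℕ} (hf : k ≤ freq 1 p) {i : Fin n}
    (hi : (i : ℕ) < k) : p i = 1 := by
  by_contra hne
  have h2 : 2 ≤ p i := by have := bnd i; omega
  have hsub : (Finset.univ.filter (fun j : Fin n => p j = 1))
      ⊆ (Finset.univ.filter (fun j : Fin n => (j : ℕ) < (i : ℕ))) := by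
    intro j hj
    have hj1 : p j = 1 := (Finset.mem_filter.mp hj).2
    refine Finset.mem_filter.mpr ⟨Finset.mem_univ _, ?_⟩
    by_contra hge
    push_neg at hge
    have : p i ≤ p j := mono (show i ≤ j from hge)
    omega
  have hcard := Finset.card_le_card hsub
  rw [card_filter_lt_eq (by omega : (i : ℕ) ≤ n)] at hcard
  rw [freq] at hf
  omega

lemma freqGE (m : ℕ) (hm : 1 ≤ m) (n k : ℕ) (hk : k ≤ n) :
    ((PK m n).filter (fun p => k ≤ freq 1 p)).card = (Sset m (n - k) k).card := by
  refine Finset.card_bij'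
    (fun p _ => fun j : Fin (n - k) => p ⟨(j : ℕ) + k, by have := j.isLt; omega⟩)
    (fun q _ => fun i : Fin n =>
      if h : (i : ℕ) < k then 1 else q ⟨(i : ℕ) - k, by have := i.isLt; omega⟩) ?_ ?_ ?_ ?_
  · intro p hp
    obtain ⟨h1, h2⟩ := Finset.mem_filter.mp hp
    obtain ⟨mono, bnd⟩ := mem_BSeq.mp h1
    refine mem_Sset.mpr ⟨?_, ?_⟩
    · intro a b hab
      exact mono (show ((⟨(a : ℕ) + k, _⟩ : Fin n)) ≤ ⟨(b : ℕ) + k, _⟩ from by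
        simp only [Fin.le_def]
        have : (a : ℕ) ≤ (b : ℕ) := hab
        omega)
    · intro j
      refine ⟨(bnd _).1, le_trans (bnd _).2 ?_⟩
      simp
  · intro q hq
    obtain ⟨mono, bnd⟩ := mem_Sset.mp hq
    have hmono : Monotone (fun i : Fin n =>
        if h : (i : ℕ) < k then 1 else q ⟨(i : ℕ) - k, by have := i.isLt; omega⟩) := by
      intro a b hab
      have hab' : (a : ℕ) ≤ (b : ℕ) := hab
      dsimp only
      by_cases ha : (a : ℕ) < k
      · rw [dif_pos ha]
        by_cases hb : (b : ℕ) < k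
        · rw [dif_pos hb]
        · rw [dif_neg hb]
          exact (bnd _).1
      · rw [dif_neg ha, dif_neg (by omega)]
        exact mono (show ((⟨(a : ℕ) - k, _⟩ : Fin (n - k))) ≤ ⟨(b : ℕ) - k, _⟩ from by
          simp only [Fin.le_def]; omega)
    refine Finset.mem_filter.mpr ⟨mem_BSeq.mpr ⟨hmono, ?_⟩, ?_⟩
    · intro i
      by_cases hi : (i : ℕ) < k
      · rw [dif_pos hi]
        omega
      · rw [dif_neg hi]
        refine ⟨(bnd _).1, le_trans (bnd _).2 ?_⟩
        have : (((⟨(i : ℕ) - k, by have := i.isLt; omega⟩ : Fin (n - k))) : ℕ) + k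
            = (i : ℕ) := by simp only []; omega
        rw [this]
    · show k ≤ freq 1 _
      rw [freq]
      have hsub : (Finset.univ.filter (fun i : Fin n => (i : ℕ) < k))
          ⊆ (Finset.univ.filter (fun i : Fin n =>
            (if h : (i : ℕ) < k then 1
              else q ⟨(i : ℕ) - k, by have := i.isLt; omega⟩) = 1)) := by
        intro i hi
        have := (Finset.mem_filter.mp hi).2
        exact Finset.mem_filter.mpr ⟨Finset.mem_univ _, by rw [dif_pos this]⟩
      have := Finset.card_le_card hsub
      rw [card_filter_lt_eq hk] at this
      exact this
  · intro p hp
    obtain ⟨h1, h2⟩ := Finset.mem_filter.mp hp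
    obtain ⟨mono, bnd⟩ := mem_BSeq.mp h1
    funext i
    dsimp only
    by_cases hi : (i : ℕ) < k
    · rw [dif_pos hi]
      exact (ones_prefix mono (fun j => (bnd j).1) h2 hi).symm
    · rw [dif_neg hi]
      congr 1
      apply Fin.ext
      simp only []
      omega
  · intro q hq
    funext j
    dsimp only
    rw [dif_neg (by omega)]
    congr 1
    apply Fin.ext
    simp only []
    omega

lemma luck_le {m n : ℕ} (p : Fin n → ℕ) : luck m p ≤ n := by
  rw [luck]
  exact le_trans (Finset.card_filter_le _ _) (by simp)

lemma freq_le {j n : ℕ} (p : Fin n → ℕ) : freq j p ≤ n := by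
  rw [freq]
  exact le_trans (Finset.card_filter_le _ _) (by simp)

lemma GEeq (m : ℕ) (hm : 1 ≤ m) (n j : ℕ) :
    ((PK m n).filter (fun p => j ≤ luck m p)).card
      = ((PK m n).filter (fun p => j ≤ freq 1 p)).card := by
  rcases le_or_gt j n with h | h
  · rw [luckGE m hm n j h, freqGE m hm n j h]
  · rw [Finset.filter_eq_empty_iff.mpr, Finset.filter_eq_empty_iff.mpr]
    · intro p _
      have := freq_le (j := 1) p
      omega
    · intro p _
      have := luck_le (m := m) p
      omega

lemma card_split {α : Type*} (s : Finset α) (g : α → ℕ) (j : ℕ) :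
    (s.filter (fun p => j ≤ g p)).card
      = (s.filter (fun p => g p = j)).card + (s.filter (fun p => j + 1 ≤ g p)).card := by
  rw [← Finset.card_union_of_disjoint]
  · congr 1
    ext a
    by_cases ha : a ∈ s <;> simp [ha] <;> omega
  · rw [Finset.disjoint_left]
    intro a h1 h2
    have := (Finset.mem_filter.mp h1).2
    have := (Finset.mem_filter.mp h2).2
    omega


theorem stmt5 (m : ℕ) (hm : 1 ≤ m) (n k : ℕ) :
    ((PK m n).filter (fun p => luck m p = k)).card =
      ((PK m n).filter (fun p => freq 1 p = k)).card := by
  have h1 := card_split (PK m n) (luck m) k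
  have h2 := card_split (PK m n) (freq 1) k
  have e1 := GEeq m hm n k
  have e2 := GEeq m hm n (k + 1)
  omega

end
end

section
/- For every n ≥ 0 there exists an involution τ : PK(n) → PK(n) (i.e. τ∘τ is the identity) such that luck(p) = ω_1(τ(p)) and ω_1(p) = luck(τ(p)) for every p ∈ PK(n). -/
open scoped Classical
open Finset

noncomputable section

namespace Stmt6

/-- Parking-list predicate. -/
def Pk (m : ℕ) (l : List ℕ) : Prop :=
  l.Pairwise (· ≤ ·) ∧ ∀ (j : ℕ) (h : j < l.length), 1 ≤ l[j] ∧ l[j] ≤ m * j + 1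

/-- Tail predicate. -/
def Tk (m : ℕ) (t : List ℕ) : Prop :=
  t.Pairwise (· ≤ ·) ∧ ∀ (j : ℕ) (h : j < t.length), 1 ≤ t[j] ∧ t[j] ≤ m * (j + 1) + 1

abbrev cutP (m ℓ : ℕ) (t : List ℕ) (j : ℕ) : Prop :=
  j < t.length ∧ m * j + 1 + ℓ ≤ t.getD j 0

def cut (m : ℕ) (t : List ℕ) (ℓ : ℕ) : ℕ :=
  if h : ∃ j, cutP m ℓ t j then Nat.find h else t.length

lemma cut_le (m : ℕ) (t : List ℕ) (ℓ : ℕ) : cut m t ℓ ≤ t.length := by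
  unfold cut
  split
  next h => exact (Nat.find_spec h).1.le
  next => exact le_rfl

lemma cut_spec {m : ℕ} {t : List ℕ} {ℓ : ℕ} (h : cut m t ℓ < t.length) :
    m * cut m t ℓ + 1 + ℓ ≤ t.getD (cut m t ℓ) 0 := by
  unfold cut at h ⊢
  by_cases hex : ∃ j, cutP m ℓ t j
  · simp only [dif_pos hex] at h ⊢
    exact (Nat.find_spec hex).2
  · simp only [dif_neg hex] at h
    exact absurd h (lt_irrefl _)

lemma cut_not {m : ℕ} {t : List ℕ} {ℓ j : ℕ} (hj : j < cut m t ℓ) (hjl : j < t.length) :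
    t.getD j 0 < m * j + 1 + ℓ := by
  by_contra hc
  push_neg at hc
  have hP : cutP m ℓ t j := ⟨hjl, hc⟩
  unfold cut at hj
  split at hj
  next h' => exact Nat.find_min h' hj hP
  next h' => exact h' ⟨j, hP⟩

lemma cut_eq_of {m : ℕ} {t : List ℕ} {ℓ k : ℕ} (hk : k ≤ t.length)
    (h1 : ∀ j, j < k → t.getD j 0 < m * j + 1 + ℓ)
    (h2 : k < t.length → m * k + 1 + ℓ ≤ t.getD k 0) : cut m t ℓ = k := by
  rcases eq_or_lt_of_le hk with heq | hlt
  · subst heq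
    refine le_antisymm (cut_le m t ℓ) ?_
    by_contra hc
    push_neg at hc
    exact absurd (cut_spec hc) (not_le.mpr (h1 _ hc))
  · have hle : cut m t ℓ ≤ k := by
      unfold cut
      split
      next h' => exact Nat.find_le ⟨hlt, h2 hlt⟩
      next h' => exact absurd ⟨k, ⟨hlt, h2 hlt⟩⟩ h'
    refine le_antisymm hle ?_
    by_contra hc
    push_neg at hc
    exact absurd (cut_spec (lt_of_lt_of_le hc hk)) (not_le.mpr (h1 _ hc))

lemma cut_mono {m : ℕ} {t : List ℕ} {ℓ ℓ' : ℕ} (h : ℓ ≤ ℓ') : cut m t ℓ ≤ cut m t ℓ' := by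
  by_contra hc
  push_neg at hc
  have h1 : cut m t ℓ' < t.length := lt_of_lt_of_le hc (cut_le m t ℓ)
  have h2 := cut_spec h1
  have h3 := cut_not hc h1
  omega

lemma cut_zero {m : ℕ} {t : List ℕ} (h : 0 < t.length → 1 ≤ t.getD 0 0) : cut m t 0 = 0 := by
  refine cut_eq_of (Nat.zero_le _) (fun j hj => absurd hj (Nat.not_lt_zero _)) ?_
  intro hl
  simpa using h hl

lemma cut_top {m : ℕ} {t : List ℕ} (hb : ∀ j, j < t.length → t.getD j 0 ≤ m * j + 1 + m) :
    cut m t (m + 1) = t.length := by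
  refine cut_eq_of le_rfl (fun j hj => ?_) (fun h => absurd h (lt_irrefl _))
  have := hb j hj
  omega

def part (m ℓ : ℕ) (t : List ℕ) : List ℕ :=
  ((t.drop (cut m t ℓ)).take (cut m t (ℓ + 1) - cut m t ℓ)).map
    (fun x => x - (m * cut m t ℓ + ℓ))

lemma part_length (m ℓ : ℕ) (t : List ℕ) :
    (part m ℓ t).length = cut m t (ℓ + 1) - cut m t ℓ := by
  have h1 := cut_le m t (ℓ + 1)
  have h2 := cut_mono (t := t) (m := m) (Nat.le_succ ℓ)
  simp [part]
  omega

lemma part_length_le (m ℓ : ℕ) (t : List ℕ) : (part m ℓ t).length ≤ t.length := by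
  have := cut_le m t (ℓ + 1)
  rw [part_length]; omega

lemma part_getD {m ℓ : ℕ} {t : List ℕ} {u : ℕ} (h : u < (part m ℓ t).length) :
    (part m ℓ t).getD u 0 = t.getD (cut m t ℓ + u) 0 - (m * cut m t ℓ + ℓ) := by
  have hl := part_length m ℓ t
  have h1 := cut_le m t (ℓ + 1)
  have hidx : cut m t ℓ + u < t.length := by omega
  rw [List.getD_eq_getElem _ _ h, List.getD_eq_getElem _ _ hidx]
  simp [part, List.getElem_take, List.getElem_drop]

lemma sorted_getD_mono {t : List ℕ} (hs : t.Pairwise (· ≤ ·)) {i j : ℕ} (hij : i ≤ j)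
    (hj : j < t.length) : t.getD i 0 ≤ t.getD j 0 := by
  rcases eq_or_lt_of_le hij with rfl | hlt
  · exact le_rfl
  · rw [List.getD_eq_getElem _ _ (lt_of_le_of_lt hij hj), List.getD_eq_getElem _ _ hj]
    exact List.pairwise_iff_getElem.mp hs i j _ _ hlt

def glueAux (m : ℕ) : List (List ℕ) → ℕ → ℕ → List ℕ
  | [], _, _ => []
  | Q :: Qs, o, ℓ => Q.map (fun x => x + (m * o + ℓ)) ++ glueAux m Qs (o + Q.length) (ℓ + 1)

def glue (m : ℕ) (Qs : List (List ℕ)) : List ℕ := glueAux m Qs 0 0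

lemma glueAux_length (m : ℕ) : ∀ (Qs : List (List ℕ)) (o ℓ : ℕ),
    (glueAux m Qs o ℓ).length = (Qs.map List.length).sum := by
  intro Qs
  induction Qs with
  | nil => intro o ℓ; simp [glueAux]
  | cons Q Qs ih => intro o ℓ; simp [glueAux, ih]

lemma glue_length (m : ℕ) (Qs : List (List ℕ)) :
    (glue m Qs).length = (Qs.map List.length).sum := glueAux_length m Qs 0 0

lemma glueAux_shift (m : ℕ) : ∀ (Qs : List (List ℕ)) (o ℓ : ℕ),
    glueAux m Qs o ℓ = (glue m Qs).map (fun x => x + (m * o + ℓ)) := by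
  intro Qs
  induction Qs with
  | nil => intro o ℓ; simp [glueAux, glue]
  | cons Q Qs ih =>
      intro o ℓ
      show Q.map (fun x => x + (m * o + ℓ)) ++ glueAux m Qs (o + Q.length) (ℓ + 1)
        = (glueAux m (Q :: Qs) 0 0).map (fun x => x + (m * o + ℓ))
      rw [show glueAux m (Q :: Qs) 0 0
          = Q.map (fun x => x + (m * 0 + 0)) ++ glueAux m Qs (0 + Q.length) 1 from rfl]
      rw [ih (0 + Q.length) 1, ih (o + Q.length) (ℓ + 1)]
      simp only [List.map_append, List.map_map]
      rw [show (fun x => x + (m * o + ℓ)) ∘ (fun x => x + (m * 0 + 0)) = fun x : ℕ => x + (m * o + ℓ)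
            from funext fun x => by simp only [Function.comp_apply]; omega,
          show (fun x => x + (m * o + ℓ)) ∘ (fun x => x + (m * (0 + Q.length) + 1))
              = fun x : ℕ => x + (m * (o + Q.length) + (ℓ + 1))
            from funext fun x => by
              simp only [Function.comp_apply]
              have hm : m * (o + Q.length) = m * o + m * Q.length := Nat.mul_add m o Q.length
              have hm0 : m * (0 + Q.length) = m * Q.length := by rw [Nat.zero_add]
              omega]

lemma glue_cons (m : ℕ) (Q : List ℕ) (Qs : List (List ℕ)) :
    glue m (Q :: Qs) = Q ++ (glue m Qs).map (fun x => x + (m * Q.length + 1)) := by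
  show Q.map (fun x => x + (m * 0 + 0)) ++ glueAux m Qs (0 + Q.length) 1 = _
  rw [glueAux_shift]
  rw [Nat.zero_add]
  congr 1
  simp

lemma Pk.mem_bounds {m : ℕ} {Q : List ℕ} (h : Pk m Q) {x : ℕ} (hx : x ∈ Q) :
    1 ≤ x ∧ x ≤ m * (Q.length - 1) + 1 := by
  obtain ⟨i, hi, rfl⟩ := List.mem_iff_getElem.mp hx
  obtain ⟨h1, h2⟩ := h.2 i hi
  refine ⟨h1, h2.trans ?_⟩
  have : m * i ≤ m * (Q.length - 1) := Nat.mul_le_mul_left m (by omega)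
  omega

lemma glue_sorted_bounds (m : ℕ) : ∀ (Qs : List (List ℕ)), (∀ Q ∈ Qs, Pk m Q) →
    (glue m Qs).Pairwise (· ≤ ·) ∧
      ∀ (j : ℕ) (h : j < (glue m Qs).length),
        1 ≤ (glue m Qs).getD j 0 ∧ (glue m Qs).getD j 0 ≤ m * j + Qs.length := by
  intro Qs
  induction Qs with
  | nil => intro _; constructor <;> simp [glue, glueAux, List.Pairwise]
  | cons Q Qs ih =>
      intro hPk
      have hQ : Pk m Q := hPk Q (by simp)
      obtain ⟨ihs, ihb⟩ := ih (fun R hR => hPk R (by simp [hR]))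
      rw [glue_cons]
      constructor
      · refine List.pairwise_append.mpr ⟨hQ.1, ?_, ?_⟩
        · exact List.Pairwise.map _ (fun a b hab => by omega) ihs
        · intro x hx y hy
          obtain ⟨z, hz, rfl⟩ := List.mem_map.mp hy
          obtain ⟨i, hi, rfl⟩ := List.mem_iff_getElem.mp hz
          have hz1 : 1 ≤ (glue m Qs)[i] := by
            have := (ihb i hi).1
            rwa [List.getD_eq_getElem _ _ hi] at this
          have hx2 := (Pk.mem_bounds hQ hx).2
          have hQlen : 1 ≤ Q.length := List.length_pos_iff.mpr (by rintro rfl; simp at hx)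
          have : m * (Q.length - 1) ≤ m * Q.length := Nat.mul_le_mul_left m (by omega)
          omega
      · intro j hj
        simp only [List.length_append, List.length_map] at hj
        by_cases hjQ : j < Q.length
        · rw [List.getD_append Q _ 0 j hjQ]
          have := hQ.2 j hjQ
          rw [List.getD_eq_getElem _ _ hjQ]
          constructor
          · exact this.1
          · have := this.2; simp only [List.length_cons]; omega
        · push_neg at hjQ
          rw [List.getD_append_right Q _ 0 j hjQ]
          set j' := j - Q.length with hj'
          have hj'lt : j' < (glue m Qs).length := by omega
          rw [List.getD_eq_getElem _ _ (by simpa using hj'lt), List.getElem_map]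
          have hb := ihb j' hj'lt
          rw [List.getD_eq_getElem _ _ hj'lt] at hb
          have hmj : m * j = m * Q.length + m * j' := by
            rw [hj']; rw [← Nat.mul_add]; congr 1; omega
          simp only [List.length_cons]
          omega

def cntFrom (m c : ℕ) : ℕ → List ℕ → ℕ
  | _, [] => 0
  | j, x :: s => (if x = m * j + 1 + c then 1 else 0) + cntFrom m c (j + 1) s

def cnt (m c : ℕ) (s : List ℕ) : ℕ := cntFrom m c 0 s

lemma cntFrom_eq (m : ℕ) : ∀ (s : List ℕ) (c j : ℕ),
    cntFrom m c j s = cntFrom m (c + m * j) 0 s := by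
  intro s
  induction s with
  | nil => intro c j; rfl
  | cons x s ih =>
      intro c j
      show (if x = m * j + 1 + c then 1 else 0) + cntFrom m c (j + 1) s
        = (if x = m * 0 + 1 + (c + m * j) then 1 else 0) + cntFrom m (c + m * j) 1 s
      rw [ih c (j + 1), ih (c + m * j) 1]
      have h1 : m * (j + 1) = m * j + m * 1 := Nat.mul_add m j 1
      congr 1
      · exact if_congr (by constructor <;> (intro; omega)) rfl rfl
      · congr 1; omega

lemma cntFrom_append (m c : ℕ) : ∀ (a b : List ℕ) (j : ℕ),
    cntFrom m c j (a ++ b) = cntFrom m c j a + cntFrom m c (j + a.length) b := by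
  intro a
  induction a with
  | nil => intro b j; simp [cntFrom]
  | cons x a ih =>
      intro b j
      show (if x = m * j + 1 + c then 1 else 0) + cntFrom m c (j + 1) (a ++ b) = _
      rw [ih b (j + 1)]
      show _ = (if x = m * j + 1 + c then 1 else 0) + cntFrom m c (j + 1) a
          + cntFrom m c (j + (a.length + 1)) b
      have : j + 1 + a.length = j + (a.length + 1) := by omega
      rw [this]
      omega

lemma cntFrom_map_shift (m c d : ℕ) (hc : 1 ≤ c) : ∀ (s : List ℕ) (j : ℕ),
    cntFrom m (c + m * d) j (s.map (fun x => x + (m * d + 1)))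
      = cntFrom m (c - 1) j s := by
  intro s
  induction s with
  | nil => intro j; rfl
  | cons x s ih =>
      intro j
      show (if x + (m * d + 1) = m * j + 1 + (c + m * d) then 1 else 0)
          + cntFrom m (c + m * d) (j + 1) (s.map (fun x => x + (m * d + 1)))
        = (if x = m * j + 1 + (c - 1) then 1 else 0) + cntFrom m (c - 1) (j + 1) s
      rw [ih (j + 1)]
      congr 1
      exact if_congr (by constructor <;> (intro; omega)) rfl rfl

lemma cntFrom_eq_zero (m c : ℕ) : ∀ (s : List ℕ) (j : ℕ),
    (∀ (u : ℕ) (h : u < s.length), s[u] ≠ m * (j + u) + 1 + c) → cntFrom m c j s = 0 := by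
  intro s
  induction s with
  | nil => intro j _; rfl
  | cons x s ih =>
      intro j hu
      show (if x = m * j + 1 + c then 1 else 0) + cntFrom m c (j + 1) s = 0
      have h0 : x ≠ m * j + 1 + c := by
        have := hu 0 (by simp)
        simpa using this
      rw [if_neg h0, ih (j + 1) ?_]
      intro u h
      have := hu (u + 1) (by simpa using Nat.succ_lt_succ h)
      have harith : m * (j + (u + 1)) = m * (j + 1 + u) := by ring_nf
      simp only [List.getElem_cons_succ] at this
      rw [← harith]
      exact this

lemma Pk_cntFrom_zero {m c : ℕ} {Q : List ℕ} (h : Pk m Q) (hc : 1 ≤ c) :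
    cntFrom m c 0 Q = 0 := by
  refine cntFrom_eq_zero m c Q 0 (fun u hu => ?_)
  have := (h.2 u hu).2
  have h0 : m * (0 + u) = m * u := by rw [Nat.zero_add]
  omega

lemma glue_cnt (m : ℕ) : ∀ (Qs : List (List ℕ)), (∀ Q ∈ Qs, Pk m Q) →
    ∀ c, Qs.length ≤ c + 1 → cnt m c (glue m Qs) = cnt m 0 (Qs.getD c []) := by
  intro Qs
  induction Qs with
  | nil => intro _ c _; simp [glue, glueAux, cnt, cntFrom, List.getD]
      
  | cons Q Qs ih =>
      intro hPk c hlen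
      have hQ : Pk m Q := hPk Q (by simp)
      rw [glue_cons]
      cases c with
      | zero =>
          have hQs : Qs = [] := by
            simp only [List.length_cons] at hlen
            exact List.length_eq_zero_iff.mp (by omega)
          subst hQs
          simp [glue, glueAux, cnt, cntFrom_append]
      | succ c =>
          unfold cnt
          rw [cntFrom_append, Pk_cntFrom_zero hQ (by omega), Nat.zero_add, Nat.zero_add,
            cntFrom_eq, show c + 1 + m * Q.length = (c + 1 + m * Q.length) from rfl]
          have := cntFrom_map_shift m (c + 1) Q.length (by omega) (glue m Qs) 0
          rw [show c + 1 + m * Q.length = (c + 1) + m * Q.length from rfl, this]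
          have : cnt m c (glue m Qs) = cnt m 0 (Qs.getD c []) :=
            ih (fun R hR => hPk R (by simp [hR])) c (by simp at hlen; omega)
          simpa [cnt] using this

lemma glue_count1 (m : ℕ) (Q : List ℕ) (Qs : List (List ℕ))
    (hPk : ∀ R ∈ Q :: Qs, Pk m R) :
    (glue m (Q :: Qs)).count 1 = Q.count 1 := by
  rw [glue_cons, List.count_append]
  have hz : ((glue m Qs).map (fun x => x + (m * Q.length + 1))).count 1 = 0 := by
    refine List.count_eq_zero.mpr (fun hmem => ?_)
    obtain ⟨z, hz, hzz⟩ := List.mem_map.mp hmem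
    obtain ⟨i, hi, rfl⟩ := List.mem_iff_getElem.mp hz
    have hb := ((glue_sorted_bounds m Qs (fun R hR => hPk R (by simp [hR]))).2 i hi).1
    rw [List.getD_eq_getElem _ _ hi] at hb
    omega
  omega

lemma cut_glue (m : ℕ) : ∀ (ℓ' : ℕ) (Qs : List (List ℕ)), (∀ Q ∈ Qs, Pk m Q) →
    ℓ' ≤ Qs.length →
    cut m (glue m Qs) ℓ' = ((Qs.take ℓ').map List.length).sum := by
  intro ℓ'
  induction ℓ' with
  | zero =>
      intro Qs hPk _
      simp only [List.take_zero, List.map_nil, List.sum_nil]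
      refine cut_zero (fun hl => ?_)
      exact ((glue_sorted_bounds m Qs hPk).2 0 hl).1
  | succ ℓ' ih =>
      intro Qs hPk hlen
      obtain ⟨Q, Qs', rfl⟩ : ∃ Q Qs', Qs = Q :: Qs' := by
        cases Qs with
        | nil => simp at hlen
        | cons a b => exact ⟨a, b, rfl⟩
      have hQ : Pk m Q := hPk Q (by simp)
      have hPk' : ∀ R ∈ Qs', Pk m R := fun R hR => hPk R (by simp [hR])
      have hc' := ih Qs' hPk' (by simpa using hlen)
      set c' := cut m (glue m Qs') ℓ' with hc'def
      have hc'le : c' ≤ (glue m Qs').length := cut_le m _ ℓ'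
      rw [glue_cons]
      have hlen2 : (Q ++ (glue m Qs').map (fun x => x + (m * Q.length + 1))).length
          = Q.length + (glue m Qs').length := by simp
      have key : cut m (Q ++ (glue m Qs').map (fun x => x + (m * Q.length + 1))) (ℓ' + 1)
          = Q.length + c' := by
        refine cut_eq_of (by omega) ?_ ?_
        · intro j hj
          by_cases hjQ : j < Q.length
          · rw [List.getD_append Q _ 0 j hjQ, List.getD_eq_getElem _ _ hjQ]
            have := (hQ.2 j hjQ).2
            omega
          · push_neg at hjQ
            rw [List.getD_append_right Q _ 0 j hjQ]
            set j' := j - Q.length with hj'def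
            have hj'lt : j' < (glue m Qs').length := by omega
            rw [List.getD_eq_getElem _ _ (by simpa using hj'lt), List.getElem_map]
            have hnot := cut_not (show j' < cut m (glue m Qs') ℓ' by omega) hj'lt
            rw [List.getD_eq_getElem _ _ hj'lt] at hnot
            have hmj : m * j = m * Q.length + m * j' := by
              rw [← Nat.mul_add]; congr 1; omega
            omega
        · intro hklt
          rw [List.getD_append_right Q _ 0 _ (by omega)]
          have hceq : Q.length + c' - Q.length = c' := by omega
          rw [hceq]
          have hc'lt : c' < (glue m Qs').length := by
            simp only [List.length_append, List.length_map] at hklt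
            omega
          have hspec : m * c' + 1 + ℓ' ≤ (glue m Qs').getD c' 0 := by
            have h5 : cut m (glue m Qs') ℓ' < (glue m Qs').length := by
              rw [← hc'def]; exact hc'lt
            have := cut_spec h5
            rwa [← hc'def] at this
          rw [List.getD_eq_getElem _ _ (by simpa using hc'lt), List.getElem_map]
          rw [List.getD_eq_getElem _ _ hc'lt] at hspec
          have hmj : m * (Q.length + c') = m * Q.length + m * c' := Nat.mul_add _ _ _
          omega
      rw [key, hc']
      simp [Nat.add_comm]

lemma glue_getD (m : ℕ) : ∀ (Qs : List (List ℕ)) (b : ℕ), b < Qs.length →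
    ∀ u, u < (Qs.getD b []).length →
    (glue m Qs).getD (((Qs.take b).map List.length).sum + u) 0
      = (Qs.getD b []).getD u 0 + (m * ((Qs.take b).map List.length).sum + b) := by
  intro Qs
  induction Qs with
  | nil => intro b hb; simp at hb
  | cons Q Qs ih =>
      intro b hb u hu
      rw [glue_cons]
      cases b with
      | zero =>
          simp only [List.take_zero, List.map_nil, List.sum_nil, Nat.zero_add,
            List.getD_cons_zero] at hu ⊢
          rw [List.getD_append Q _ 0 u hu]
          omega
      | succ b =>
          simp only [List.take_succ_cons, List.map_cons, List.sum_cons,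
            List.getD_cons_succ] at hu ⊢
          set o := ((Qs.take b).map List.length).sum with hodef
          have hb' : b < Qs.length := by simpa using hb
          have holt : o + u < (glue m Qs).length := by
            rw [glue_length]
            have : Qs = Qs.take (b + 1) ++ Qs.drop (b + 1) := (List.take_append_drop _ _).symm
            have hsum : (Qs.map List.length).sum
                = ((Qs.take (b + 1)).map List.length).sum
                  + ((Qs.drop (b + 1)).map List.length).sum := by
              conv_lhs => rw [this]
              simp
            have htk : ((Qs.take (b + 1)).map List.length).sum
                = o + (Qs.getD b []).length := by
              simp only [List.take_succ, List.getElem?_eq_getElem hb', Option.toList_some,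
                List.map_append, List.sum_append, List.map_cons, List.map_nil, List.sum_cons,
                List.sum_nil, hodef, List.getD_eq_getElem _ _ hb']
              omega
            omega
          rw [List.getD_append_right Q _ 0 _ (by omega),
            show Q.length + o + u - Q.length = o + u by omega]
          rw [List.getD_eq_getElem _ _ (by simpa using holt), List.getElem_map]
          have := ih b hb' u hu
          simp only [← hodef] at this
          rw [List.getD_eq_getElem _ _ holt] at this
          rw [this]
          have hmj : m * (Q.length + o) = m * Q.length + m * o := Nat.mul_add _ _ _
          omega

lemma part_Pk {m : ℕ} {t : List ℕ} (ht : Tk m t) (ℓ : ℕ) : Pk m (part m ℓ t) := by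
  have hlen := part_length m ℓ t
  have hcle := cut_le m t (ℓ + 1)
  have hmono : cut m t ℓ ≤ cut m t (ℓ + 1) := cut_mono (Nat.le_succ ℓ)
  constructor
  · refine List.pairwise_iff_getElem.mpr (fun i j hi hj hij => ?_)
    rw [← List.getD_eq_getElem _ 0 hi, ← List.getD_eq_getElem _ 0 hj,
      part_getD hi, part_getD hj]
    have hle : t.getD (cut m t ℓ + i) 0 ≤ t.getD (cut m t ℓ + j) 0 :=
      sorted_getD_mono ht.1 (by omega) (by omega)
    omega
  · intro u hu
    rw [← List.getD_eq_getElem _ 0 hu, part_getD hu]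
    have hidx : cut m t ℓ + u < t.length := by omega
    have hc0 : cut m t ℓ < t.length := by omega
    have hlow : m * cut m t ℓ + 1 + ℓ ≤ t.getD (cut m t ℓ + u) 0 :=
      le_trans (cut_spec hc0) (sorted_getD_mono ht.1 (by omega) hidx)
    have hhigh : t.getD (cut m t ℓ + u) 0 < m * (cut m t ℓ + u) + 1 + (ℓ + 1) :=
      cut_not (by omega) hidx
    have hmul : m * (cut m t ℓ + u) = m * cut m t ℓ + m * u := Nat.mul_add _ _ _
    omega

def parts (m : ℕ) (t : List ℕ) : List (List ℕ) :=
  (List.range (m + 1)).map (fun ℓ => part m ℓ t)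

lemma parts_length (m : ℕ) (t : List ℕ) : (parts m t).length = m + 1 := by simp [parts]

lemma parts_mem_Pk {m : ℕ} {t : List ℕ} (ht : Tk m t) {Q : List ℕ} (hQ : Q ∈ parts m t) :
    Pk m Q := by
  obtain ⟨ℓ, _, rfl⟩ := List.mem_map.mp hQ
  exact part_Pk ht ℓ

lemma parts_getD {m : ℕ} {t : List ℕ} {b : ℕ} (hb : b < m + 1) :
    (parts m t).getD b [] = part m b t := by
  rw [List.getD_eq_getElem _ _ (by simpa [parts] using hb)]
  simp [parts]

lemma parts_mem_length_le {m : ℕ} {t : List ℕ} {Q : List ℕ} (hQ : Q ∈ parts m t) :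
    Q.length ≤ t.length := by
  obtain ⟨ℓ, _, rfl⟩ := List.mem_map.mp hQ
  exact part_length_le m ℓ t

lemma glueAux_parts {m : ℕ} {t : List ℕ} (ht : Tk m t) :
    ∀ (d ℓ : ℕ), ℓ + d = m + 1 →
      glueAux m ((List.range d).map (fun i => part m (ℓ + i) t)) (cut m t ℓ) ℓ
        = t.drop (cut m t ℓ) := by
  intro d
  induction d with
  | zero =>
      intro ℓ hℓ
      have hℓ' : ℓ = m + 1 := by omega
      subst hℓ'
      have hct : cut m t (m + 1) = t.length := by
        refine cut_top (fun j hj => ?_)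
        have := (ht.2 j hj).2
        rw [List.getD_eq_getElem _ _ hj]
        have hmul : m * (j + 1) = m * j + m := by rw [Nat.mul_add]; omega
        omega
      simp [glueAux, hct, List.drop_length]
  | succ d ih =>
      intro ℓ hℓ
      rw [List.range_succ_eq_map]
      simp only [List.map_cons, List.map_map, Nat.add_zero]
      have hcomp : ((fun i => part m (ℓ + i) t) ∘ Nat.succ) = (fun i => part m ((ℓ + 1) + i) t) := by
        funext i
        simp only [Function.comp_apply]
        congr 1
        omega
      rw [hcomp]
      show (part m ℓ t).map (fun x => x + (m * cut m t ℓ + ℓ)) ++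
          glueAux m ((List.range d).map (fun i => part m ((ℓ + 1) + i) t))
            (cut m t ℓ + (part m ℓ t).length) (ℓ + 1) = t.drop (cut m t ℓ)
      have hmono : cut m t ℓ ≤ cut m t (ℓ + 1) := cut_mono (Nat.le_succ ℓ)
      have hcle := cut_le m t (ℓ + 1)
      have hlen2 : cut m t ℓ + (part m ℓ t).length = cut m t (ℓ + 1) := by
        rw [part_length]; omega
      rw [hlen2, ih (ℓ + 1) (by omega)]
      have hmap : (part m ℓ t).map (fun x => x + (m * cut m t ℓ + ℓ))
          = (t.drop (cut m t ℓ)).take (cut m t (ℓ + 1) - cut m t ℓ) := by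
        unfold part
        rw [List.map_map]
        have hpt : ∀ x ∈ (t.drop (cut m t ℓ)).take (cut m t (ℓ + 1) - cut m t ℓ),
            ((fun x => x + (m * cut m t ℓ + ℓ)) ∘ (fun x => x - (m * cut m t ℓ + ℓ))) x
              = id x := by
          intro x hx
          obtain ⟨i, hi, rfl⟩ := List.mem_iff_getElem.mp hx
          simp only [List.length_take, List.length_drop] at hi
          have hilt : i < cut m t (ℓ + 1) - cut m t ℓ := by omega
          have hidx : cut m t ℓ + i < t.length := by omega
          have hval : ((t.drop (cut m t ℓ)).take (cut m t (ℓ + 1) - cut m t ℓ))[i]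
              = t[cut m t ℓ + i]'hidx := by
            rw [List.getElem_take, List.getElem_drop]
          rw [hval]
          have hc0 : cut m t ℓ < t.length := by omega
          have hlow : m * cut m t ℓ + 1 + ℓ ≤ t.getD (cut m t ℓ + i) 0 :=
            le_trans (cut_spec hc0) (sorted_getD_mono ht.1 (by omega) hidx)
          rw [List.getD_eq_getElem _ _ hidx] at hlow
          simp only [Function.comp_apply, id_eq]
          omega
        rw [List.map_congr_left hpt, List.map_id]
      rw [hmap]
      have hdd : t.drop (cut m t (ℓ + 1))
          = (t.drop (cut m t ℓ)).drop (cut m t (ℓ + 1) - cut m t ℓ) := by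
        rw [List.drop_drop]
        congr 1
        omega
      rw [hdd, List.take_append_drop]

lemma glue_parts {m : ℕ} {t : List ℕ} (ht : Tk m t) : glue m (parts m t) = t := by
  have h0 : cut m t 0 = 0 := by
    refine cut_zero (fun hl => ?_)
    have := (ht.2 0 hl).1
    rwa [List.getD_eq_getElem _ _ hl]
  have haux := glueAux_parts ht (m + 1) 0 (by omega)
  rw [h0, List.drop_zero] at haux
  unfold glue parts
  rw [show (fun ℓ => part m ℓ t) = (fun i => part m (0 + i) t) from
    funext fun i => by rw [Nat.zero_add]]
  exact haux

lemma part_glue {m : ℕ} {Qs : List (List ℕ)} (hPk : ∀ Q ∈ Qs, Pk m Q)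
    (hlen : Qs.length = m + 1) {b : ℕ} (hb : b ≤ m) :
    part m b (glue m Qs) = Qs.getD b [] := by
  have hb' : b < Qs.length := by omega
  have hcb := cut_glue m b Qs hPk (by omega)
  have hcb1 := cut_glue m (b + 1) Qs hPk (by omega)
  have hQb : Qs.getD b [] = Qs[b] := List.getD_eq_getElem _ _ hb'
  have ho1 : ((Qs.take (b + 1)).map List.length).sum
      = ((Qs.take b).map List.length).sum + Qs[b].length := by
    simp only [List.take_succ, List.getElem?_eq_getElem hb', Option.toList_some,
      List.map_append, List.sum_append, List.map_cons, List.sum_cons, List.map_nil,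
      List.sum_nil]
    omega
  have hplen : (part m b (glue m Qs)).length = (Qs.getD b []).length := by
    rw [part_length, hcb, hcb1, ho1, hQb]
    omega
  refine List.ext_getElem hplen (fun i hi hi' => ?_)
  rw [← List.getD_eq_getElem _ 0 hi, part_getD hi, hcb]
  have hgl := glue_getD m Qs b hb' i (by rwa [hplen] at hi)
  rw [hgl, ← List.getD_eq_getElem (Qs.getD b []) 0 hi']
  omega

def phi (m : ℕ) : List ℕ → List ℕ
  | [] => []
  | _x :: t => _x :: glue m (((parts m t).reverse.attach).map (fun Q => phi m Q.1))
termination_by l => l.length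
decreasing_by
  have hQ := parts_mem_length_le (List.mem_reverse.mp Q.2)
  simp only [List.length_cons]
  omega

lemma phi_nil (m : ℕ) : phi m [] = [] := by rw [phi]

lemma phi_cons (m x : ℕ) (t : List ℕ) :
    phi m (x :: t) = x :: glue m ((parts m t).reverse.map (phi m)) := by
  rw [phi, List.attach_map_val]

lemma Tk_cons_Pk {m : ℕ} {s : List ℕ} (h : Tk m s) : Pk m (1 :: s) := by
  constructor
  · rw [List.pairwise_cons]
    refine ⟨fun b hb => ?_, h.1⟩
    obtain ⟨i, hi, rfl⟩ := List.mem_iff_getElem.mp hb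
    exact (h.2 i hi).1
  · intro j hj
    cases j with
    | zero => simp
    | succ j =>
        have hj' : j < s.length := by simpa using hj
        have := h.2 j hj'
        simpa using this

lemma Pk_cons_Tk {m : ℕ} {x : ℕ} {t : List ℕ} (h : Pk m (x :: t)) : x = 1 ∧ Tk m t := by
  have hx0 := h.2 0 (by simp)
  simp at hx0
  refine ⟨by omega, h.1.of_cons, fun j hj => ?_⟩
  have := h.2 (j + 1) (by simpa using Nat.succ_lt_succ hj)
  simpa using this

lemma cnt_one_cons (m : ℕ) (s : List ℕ) : cnt m 0 (1 :: s) = 1 + cnt m m s := by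
  show (if (1 : ℕ) = m * 0 + 1 + 0 then 1 else 0) + cntFrom m 0 1 s = 1 + cnt m m s
  rw [if_pos (by simp), cntFrom_eq m s 0 1]
  unfold cnt
  rw [show 0 + m * 1 = m by omega]

lemma phi_spec (m : ℕ) : ∀ (n : ℕ) (l : List ℕ), l.length ≤ n → Pk m l →
    Pk m (phi m l) ∧ (phi m l).length = l.length ∧ phi m (phi m l) = l ∧
      cnt m 0 (phi m l) = l.count 1 ∧ (phi m l).count 1 = cnt m 0 l := by
  intro n
  induction n with
  | zero =>
      intro l hl hPk
      have hnil : l = [] := List.length_eq_zero_iff.mp (by omega)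
      subst hnil
      refine ⟨by rw [phi_nil]; exact hPk, by rw [phi_nil], by rw [phi_nil, phi_nil], ?_, ?_⟩ <;>
        simp [phi_nil, cnt, cntFrom]
  | succ n ih =>
      intro l hl hPk
      cases l with
      | nil =>
          refine ⟨by rw [phi_nil]; exact hPk, by rw [phi_nil], by rw [phi_nil, phi_nil], ?_, ?_⟩ <;>
            simp [phi_nil, cnt, cntFrom]
      | cons x t =>
          obtain ⟨hx, hTk⟩ := Pk_cons_Tk hPk
          subst hx
          have hllen : t.length ≤ n := by simpa using hl
          set Ps := parts m t with hPs
          have hPsPk : ∀ Q ∈ Ps, Pk m Q := fun Q hQ => parts_mem_Pk hTk hQ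
          have hIH : ∀ Q ∈ Ps, Pk m (phi m Q) ∧ (phi m Q).length = Q.length ∧
              phi m (phi m Q) = Q ∧ cnt m 0 (phi m Q) = Q.count 1 ∧
              (phi m Q).count 1 = cnt m 0 Q :=
            fun Q hQ => ih Q (le_trans (parts_mem_length_le hQ) hllen) (hPsPk Q hQ)
          set Rs := Ps.reverse.map (phi m) with hRs
          have hRsPk : ∀ R ∈ Rs, Pk m R := by
            intro R hR
            obtain ⟨Q, hQ, rfl⟩ := List.mem_map.mp hR
            exact (hIH Q (List.mem_reverse.mp hQ)).1
          have hRslen : Rs.length = m + 1 := by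
            rw [hRs]; simp [hPs, parts_length]
          set G := glue m Rs with hG
          have hGsb := glue_sorted_bounds m Rs hRsPk
          have hTkG : Tk m G := by
            refine ⟨hGsb.1, fun j hj => ?_⟩
            have hbd := hGsb.2 j hj
            rw [List.getD_eq_getElem _ _ hj] at hbd
            have hmul : m * (j + 1) = m * j + m := by rw [Nat.mul_add]; omega
            rw [hRslen] at hbd
            omega
          have hphil : phi m (1 :: t) = 1 :: G := by rw [phi_cons, ← hRs, ← hG]
          have hsumR : (Rs.map List.length).sum = (Ps.map List.length).sum := by
            have hmapeq : Ps.reverse.map (List.length ∘ phi m) = Ps.reverse.map List.length :=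
              List.map_congr_left (fun Q hQ => (hIH Q (List.mem_reverse.mp hQ)).2.1)
            rw [hRs, List.map_map, hmapeq]
            simp [List.sum_reverse]
          have hGlen : G.length = t.length := by
            rw [hG, glue_length, hsumR, ← glue_length m Ps, hPs, glue_parts hTk]
          have hpartsG : parts m G = Rs := by
            refine List.ext_getElem (by rw [parts_length, hRslen]) (fun b hb1 hb2 => ?_)
            rw [parts_length] at hb1
            have h1 : (parts m G)[b] = part m b G := by simp [parts]
            rw [h1, hG, part_glue hRsPk hRslen (by omega : b ≤ m),
              List.getD_eq_getElem _ _ hb2]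
          have hRsrev : Rs.reverse.map (phi m) = Ps := by
            rw [hRs, ← List.map_reverse, List.reverse_reverse, List.map_map]
            have hmapeq : Ps.map (phi m ∘ phi m) = Ps.map id :=
              List.map_congr_left (fun Q hQ => (hIH Q hQ).2.2.1)
            rw [hmapeq, List.map_id]
          have hphiphi : phi m (phi m (1 :: t)) = 1 :: t := by
            rw [hphil, phi_cons, hpartsG, hRsrev, hPs, glue_parts hTk]
          have hPscons : Ps = part m 0 t :: (List.range m).map (fun i => part m (i + 1) t) := by
            rw [hPs]
            unfold parts
            rw [List.range_succ_eq_map]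
            simp only [List.map_cons, List.map_map]
            first
            | rfl
            | (congr 1
               funext i
               simp [Function.comp, Nat.succ_eq_add_one, Nat.add_comm])
          have hRscons : ∃ Rs', Rs = phi m (part m m t) :: Rs' := by
            have h0 : Rs.getD 0 [] = phi m (part m m t) := by
              have hlenPs : Ps.length = m + 1 := by rw [hPs, parts_length]
              have hlt : 0 < (Ps.reverse.map (phi m)).length := by simp [hlenPs]
              rw [hRs, List.getD_eq_getElem _ _ hlt]
              rw [List.getElem_map, List.getElem_reverse]
              congr 1
              rw [← List.getD_eq_getElem _ ([] : List ℕ) (by omega),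
                show Ps.length - 1 - 0 = m by omega, hPs, parts_getD (by omega)]
            cases hRs0 : Rs with
            | nil => rw [hRs0] at hRslen; simp at hRslen
            | cons R0 Rs' =>
                refine ⟨Rs', ?_⟩
                congr 1
                rw [← h0, hRs0]
                simp
          have hRgm : Rs.getD m [] = phi m (part m 0 t) := by
            have hlenPs : Ps.length = m + 1 := by rw [hPs, parts_length]
            have hlt : m < (Ps.reverse.map (phi m)).length := by simp [hlenPs]
            rw [hRs, List.getD_eq_getElem _ _ hlt]
            rw [List.getElem_map, List.getElem_reverse]
            congr 1
            rw [← List.getD_eq_getElem _ ([] : List ℕ) (by omega),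
              show Ps.length - 1 - m = 0 by omega, hPs, parts_getD (by omega)]
          have hcnt_t : cnt m m t = cnt m 0 (part m m t) := by
            conv_lhs => rw [show t = glue m Ps from (hPs ▸ glue_parts hTk).symm]
            rw [glue_cnt m Ps hPsPk m (by rw [hPs, parts_length])]
            rw [hPs, parts_getD (by omega)]
          have hcount_t : t.count 1 = (part m 0 t).count 1 := by
            conv_lhs => rw [show t = glue m Ps from (hPs ▸ glue_parts hTk).symm]
            rw [hPscons] at hPsPk ⊢
            exact glue_count1 m _ _ hPsPk
          have hPkphil : Pk m (phi m (1 :: t)) := by rw [hphil]; exact Tk_cons_Pk hTkG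
          refine ⟨hPkphil, by rw [hphil]; simpa using hGlen, hphiphi, ?_, ?_⟩
          · -- cnt m 0 (phi l) = l.count 1
            rw [hphil, cnt_one_cons, hG, glue_cnt m Rs hRsPk m (by omega), hRgm,
              (hIH _ (by rw [hPscons]; exact List.mem_cons_self)).2.2.2.1,
              ← hcount_t]
            simp [List.count_cons]
            omega
          · -- (phi l).count 1 = cnt m 0 l
            obtain ⟨Rs', hRs'⟩ := hRscons
            rw [hphil, cnt_one_cons]
            have hGc : G.count 1 = (phi m (part m m t)).count 1 := by
              rw [hG, hRs']
              exact glue_count1 m _ _ (by rw [← hRs']; exact hRsPk)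
            have hpartmem : part m m t ∈ Ps := by
              rw [hPs]
              unfold parts
              exact List.mem_map.mpr ⟨m, by simp, rfl⟩
            rw [show ((1 : ℕ) :: G).count 1 = G.count 1 + 1 by simp [List.count_cons]]
            rw [hGc, (hIH _ hpartmem).2.2.2.2, ← hcnt_t]
            omega

lemma sorted_ofFn_iff {n : ℕ} {p : Fin n → ℕ} :
    (List.ofFn p).Pairwise (· ≤ ·) ↔ Monotone p := by
  constructor
  · intro h i j hij
    rcases eq_or_lt_of_le hij with rfl | hlt
    · exact le_rfl
    · have := List.pairwise_iff_getElem.mp h i j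
        (by simpa using i.2) (by simpa using j.2) (by exact_mod_cast hlt)
      simpa using this
  · intro h
    refine List.pairwise_iff_getElem.mpr (fun i j hi hj hij => ?_)
    simp only [List.getElem_ofFn]
    exact h (show (⟨i, by simpa using hi⟩ : Fin n) ≤ ⟨j, by simpa using hj⟩ from hij.le)

lemma Pk_ofFn_iff {m n : ℕ} {p : Fin n → ℕ} :
    Pk m (List.ofFn p) ↔ (Monotone p ∧ ∀ i : Fin n, 1 ≤ p i ∧ p i ≤ m * (i : ℕ) + 1) := by
  constructor
  · rintro ⟨hs, hb⟩
    refine ⟨sorted_ofFn_iff.mp hs, fun i => ?_⟩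
    have := hb (i : ℕ) (by simpa using i.2)
    simpa using this
  · rintro ⟨hm, hb⟩
    refine ⟨sorted_ofFn_iff.mpr hm, fun j hj => ?_⟩
    have hj' : j < n := by simpa using hj
    have := hb ⟨j, hj'⟩
    simpa using this

lemma cntFrom_ofFn (m c : ℕ) : ∀ (n : ℕ) (p : Fin n → ℕ) (j : ℕ),
    cntFrom m c j (List.ofFn p)
      = ∑ i : Fin n, if p i = m * (j + (i : ℕ)) + 1 + c then 1 else 0 := by
  intro n
  induction n with
  | zero => intro p j; simp [cntFrom]
  | succ n ih =>
      intro p j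
      rw [List.ofFn_succ]
      show (if p 0 = m * j + 1 + c then 1 else 0)
          + cntFrom m c (j + 1) (List.ofFn fun i => p i.succ) = _
      rw [ih (fun i => p i.succ) (j + 1), Fin.sum_univ_succ]
      simp only [Fin.val_zero, Nat.add_zero, Fin.val_succ]
      congr 1
      refine Finset.sum_congr rfl (fun i _ => ?_)
      simp only [show j + 1 + (i : ℕ) = j + ((i : ℕ) + 1) from by omega]

lemma cnt_ofFn_luck (m n : ℕ) (p : Fin n → ℕ) : cnt m 0 (List.ofFn p) = luck m p := by
  rw [cnt, cntFrom_ofFn m 0 n p 0, luck, Finset.card_filter]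
  refine Finset.sum_congr rfl (fun i _ => ?_)
  refine if_congr ?_ rfl rfl
  rw [show m * (0 + (i : ℕ)) + 1 + 0 = m * (i : ℕ) + 1 by rw [Nat.zero_add]]

lemma count_ofFn_freq (y : ℕ) : ∀ (n : ℕ) (p : Fin n → ℕ),
    (List.ofFn p).count y = freq y p := by
  intro n
  induction n with
  | zero => intro p; simp [freq]
  | succ n ih =>
      intro p
      rw [List.ofFn_succ, List.count_cons, ih (fun i => p i.succ)]
      simp only [freq, Finset.card_filter]
      rw [Fin.sum_univ_succ, Nat.add_comm]
      congr 1
      all_goals first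
      | rfl
      | exact if_congr beq_iff_eq rfl rfl
      | exact if_congr (beq_iff_eq.trans eq_comm) rfl rfl

lemma mem_PK_iff {m n : ℕ} {p : Fin n → ℕ} :
    p ∈ PK m n ↔ Monotone p ∧ ∀ i : Fin n, 1 ≤ p i ∧ p i ≤ m * (i : ℕ) + 1 := by
  rw [PK, BSeq, Set.Finite.mem_toFinset]
  rfl

end Stmt6

theorem stmt6 (m : ℕ) (hm : 1 ≤ m) (n : ℕ) :
    ∃ τ : {p // p ∈ PK m n} → {p // p ∈ PK m n},
      (∀ p, τ (τ p) = p) ∧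
      (∀ p : {p // p ∈ PK m n},
        luck m p.1 = freq 1 (τ p).1 ∧ freq 1 p.1 = luck m (τ p).1) := by
  have key : ∀ p : Fin n → ℕ, p ∈ PK m n →
      (fun i : Fin n => (Stmt6.phi m (List.ofFn p)).getD (i : ℕ) 0) ∈ PK m n ∧
      List.ofFn (fun i : Fin n => (Stmt6.phi m (List.ofFn p)).getD (i : ℕ) 0)
        = Stmt6.phi m (List.ofFn p) := by
    intro p hp
    have hPk : Stmt6.Pk m (List.ofFn p) := Stmt6.Pk_ofFn_iff.mpr (Stmt6.mem_PK_iff.mp hp)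
    have hspec := Stmt6.phi_spec m n (List.ofFn p) (by simp) hPk
    have hlen : (Stmt6.phi m (List.ofFn p)).length = n := by
      rw [hspec.2.1, List.length_ofFn]
    have hofFn : List.ofFn (fun i : Fin n => (Stmt6.phi m (List.ofFn p)).getD (i : ℕ) 0)
        = Stmt6.phi m (List.ofFn p) := by
      refine List.ext_getElem (by simp [hlen]) (fun i h1 h2 => ?_)
      simp only [List.getElem_ofFn]
      rw [List.getD_eq_getElem _ _ h2]
    refine ⟨Stmt6.mem_PK_iff.mpr (Stmt6.Pk_ofFn_iff.mp (by rw [hofFn]; exact hspec.1)), hofFn⟩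
  refine ⟨fun p => ⟨_, (key p.1 p.2).1⟩, ?_, ?_⟩
  · rintro ⟨p, hp⟩
    apply Subtype.ext
    have hPk : Stmt6.Pk m (List.ofFn p) := Stmt6.Pk_ofFn_iff.mpr (Stmt6.mem_PK_iff.mp hp)
    have hspec := Stmt6.phi_spec m n (List.ofFn p) (by simp) hPk
    have h1 := (key p hp).2
    funext i
    show (Stmt6.phi m (List.ofFn (fun i : Fin n =>
        (Stmt6.phi m (List.ofFn p)).getD (i : ℕ) 0))).getD (i : ℕ) 0 = p i
    rw [h1, hspec.2.2.1, List.getD_eq_getElem _ _ (by simpa using i.2)]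
    simp
  · rintro ⟨p, hp⟩
    have hPk : Stmt6.Pk m (List.ofFn p) := Stmt6.Pk_ofFn_iff.mpr (Stmt6.mem_PK_iff.mp hp)
    have hspec := Stmt6.phi_spec m n (List.ofFn p) (by simp) hPk
    have h1 := (key p hp).2
    constructor
    · show luck m p = freq 1 (fun i : Fin n => (Stmt6.phi m (List.ofFn p)).getD (i : ℕ) 0)
      rw [← Stmt6.count_ofFn_freq 1 n _, h1, hspec.2.2.2.2, Stmt6.cnt_ofFn_luck]
    · show freq 1 p = luck m (fun i : Fin n => (Stmt6.phi m (List.ofFn p)).getD (i : ℕ) 0)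
      rw [← Stmt6.cnt_ofFn_luck m n _, h1, hspec.2.2.2.1, Stmt6.count_ofFn_freq]

end
end
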